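/- arXiv:2312.07291 — 5 statements merged into one kernel-verified Lean document; each statement's English description precedes it below -/
import Mathlib

section
/- Let τ > 0, α > −1 be real, n ∈ ℕ, and λ ∈ ℂ with Re λ < 0. Then s_{n,τ,α,λ} = (Γ(α/2+1)/(τ/2−λ)^{α/2+1}) · τ^{(α+1)/2} · (Γ(n+α+1)/(Γ(α+1)·n!)) · √(n!/Γ(n+α+1)) · Σ_{k=0}^n ((−n)_k · (α/2+1)_k / ((α+1)_k · k!)) · (τ/(τ/2−λ))^k, where (x)_k denotes the ascending Pochhammer symbol x(x+1)⋯(x+k−1), and (τ/2−λ)^{α/2+1} is the principal-branch complex power (note Re(τ/2−λ) > 0). -/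
open MeasureTheory

/-- The generalized Laguerre polynomial
`L_n^α(t) = ∑_{k=0}^n (-1)^k (Γ(n+α+1)/(Γ(k+α+1)(n-k)!)) t^k/k!`. -/
noncomputable def lagPoly (α : ℝ) (n : ℕ) (t : ℝ) : ℝ :=
  ∑ k ∈ Finset.range (n + 1),
    (-1 : ℝ) ^ k * (Real.Gamma (n + α + 1) / (Real.Gamma (k + α + 1) * (n - k).factorial)) *
      t ^ k / (k.factorial : ℝ)

/-- The Laguerre function `l_{n,τ}^α(t)`. -/
noncomputable def lagFun (α τ : ℝ) (n : ℕ) (t : ℝ) : ℝ :=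
  Real.sqrt (n.factorial / Real.Gamma (n + α + 1)) * τ ^ ((α + 1) / 2) *
    t ^ (α / 2) * Real.exp (-τ * t / 2) * lagPoly α n (τ * t)

/-- The Laguerre coefficient `s_{n,τ,α,λ} = ∫₀^∞ e^{λ t} l_{n,τ}^α(t) dt`. -/
noncomputable def lagCoef (α τ : ℝ) (n : ℕ) (z : ℂ) : ℂ :=
  ∫ t in Set.Ioi (0 : ℝ), Complex.exp (z * t) * (lagFun α τ n t : ℂ)

open MeasureTheory Set Filter

lemma intOn_rpow_exp {q c : ℝ} (hq : -1 < q) (hc : 0 < c) :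
    IntegrableOn (fun t : ℝ => t ^ q * Real.exp (-(c * t))) (Ioi 0) := by
  have h0 := Real.GammaIntegral_convergent (show 0 < q + 1 by linarith)
  have h1 : IntegrableOn (fun x : ℝ => Real.exp (-(c * x)) * (c * x) ^ (q + 1 - 1)) (Ioi 0) := by
    refine (integrableOn_Ioi_comp_mul_left_iff
      (fun x : ℝ => Real.exp (-x) * x ^ (q + 1 - 1)) 0 hc).2 ?_
    simpa using h0
  have h2 : IntegrableOn (fun x : ℝ => c ^ q * (x ^ q * Real.exp (-(c * x)))) (Ioi 0) := by
    refine h1.congr_fun (fun x hx => ?_) measurableSet_Ioi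
    rw [mem_Ioi] at hx
    beta_reduce
    rw [add_sub_cancel_right, Real.mul_rpow hc.le hx.le]
    ring
  have h3 : IntegrableOn
      (fun x : ℝ => (c ^ q)⁻¹ * (c ^ q * (x ^ q * Real.exp (-(c * x))))) (Ioi 0) :=
    h2.const_mul (c ^ q)⁻¹
  refine (h3.congr_fun (fun x hx => ?_) measurableSet_Ioi : _)
  beta_reduce
  rw [← mul_assoc, inv_mul_cancel₀ (ne_of_gt (Real.rpow_pos_of_pos hc q)), one_mul]

lemma aesm_exp_rpow (b : ℂ) (q : ℝ) :
    AEStronglyMeasurable (fun t : ℝ => Complex.exp (-b * t) * ((t ^ q : ℝ) : ℂ))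
      (volume.restrict (Ioi 0)) := by
  refine ContinuousOn.aestronglyMeasurable ?_ measurableSet_Ioi
  refine ContinuousOn.mul ?_ ?_
  · exact ((continuous_const.mul Complex.continuous_ofReal).cexp).continuousOn
  · exact Complex.continuous_ofReal.comp_continuousOn
      (fun x hx => (Real.continuousAt_rpow_const x q (Or.inl (ne_of_gt hx))).continuousWithinAt)

lemma norm_exp_rpow {b : ℂ} {q t : ℝ} (ht : 0 < t) :
    ‖Complex.exp (-b * t) * ((t ^ q : ℝ) : ℂ)‖ = t ^ q * Real.exp (-(b.re * t)) := by
  rw [norm_mul, Complex.norm_exp, Complex.norm_real,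
    Real.norm_eq_abs, abs_of_nonneg (Real.rpow_nonneg ht.le q)]
  have : (-b * t).re = -(b.re * t) := by simp [Complex.mul_re]
  rw [this, mul_comm]

lemma intOn_cexp_rpow {b : ℂ} (hb : 0 < b.re) {q : ℝ} (hq : -1 < q) :
    IntegrableOn (fun t : ℝ => Complex.exp (-b * t) * ((t ^ q : ℝ) : ℂ)) (Ioi 0) := by
  refine Integrable.mono' (intOn_rpow_exp hq hb) (aesm_exp_rpow b q) ?_
  rw [ae_restrict_iff' measurableSet_Ioi]
  exact ae_of_all _ fun t ht => le_of_eq (norm_exp_rpow ht)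

lemma contOn_exp_rpow (b : ℂ) (q : ℝ) :
    ContinuousOn (fun t : ℝ => Complex.exp (-b * t) * ((t ^ q : ℝ) : ℂ)) (Ioi 0) := by
  refine ContinuousOn.mul ?_ ?_
  · exact ((continuous_const.mul Complex.continuous_ofReal).cexp).continuousOn
  · exact Complex.continuous_ofReal.comp_continuousOn
      (fun x hx => (Real.continuousAt_rpow_const x q (Or.inl (ne_of_gt hx))).continuousWithinAt)

lemma laplace_rpow {q : ℝ} (hq : -1 < q) {b : ℂ} (hb : 0 < b.re) :
    ∫ t in Ioi (0 : ℝ), Complex.exp (-b * t) * ((t ^ q : ℝ) : ℂ)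
      = (Real.Gamma (q + 1) : ℂ) / b ^ ((q + 1 : ℝ) : ℂ) := by
  set U : Set ℂ := {w | 0 < w.re} with hU
  set F : ℂ → ℂ := fun w => ∫ t in Ioi (0 : ℝ), Complex.exp (-w * t) * ((t ^ q : ℝ) : ℂ) with hF
  set G : ℂ → ℂ := fun w => (Real.Gamma (q + 1) : ℂ) / w ^ ((q + 1 : ℝ) : ℂ) with hG
  have hUopen : IsOpen U := isOpen_lt continuous_const Complex.continuous_re
  have hUconn : IsPreconnected U := (convex_halfSpace_re_gt 0).isPreconnected
  -- differentiability of F on U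
  have hFdiff : ∀ w ∈ U, DifferentiableAt ℂ F w := by
    intro w hw
    have hwre : 0 < w.re := hw
    set ε : ℝ := w.re / 2 with hε
    have hε0 : 0 < ε := by positivity
    have key := hasDerivAt_integral_of_dominated_loc_of_deriv_le (μ := volume.restrict (Ioi 0))
      (F := fun w (t : ℝ) => Complex.exp (-w * t) * ((t ^ q : ℝ) : ℂ))
      (F' := fun w (t : ℝ) => -(t : ℂ) * (Complex.exp (-w * t) * ((t ^ q : ℝ) : ℂ)))
      (x₀ := w) (bound := fun t => t ^ (q + 1) * Real.exp (-(ε * t))) (Metric.ball_mem_nhds w hε0)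
      (Filter.Eventually.of_forall fun w' => aesm_exp_rpow w' q)
      (intOn_cexp_rpow hwre hq)
      (((Complex.continuous_ofReal.neg.continuousOn).mul
        (contOn_exp_rpow w q)).aestronglyMeasurable measurableSet_Ioi)
      ?_ (intOn_rpow_exp (by linarith) hε0) ?_
    · exact key.2.differentiableAt
    · -- bound
      rw [ae_restrict_iff' measurableSet_Ioi]
      refine ae_of_all _ fun t ht w' hw' => ?_
      rw [mem_Ioi] at ht
      have hre : ε ≤ w'.re := by
        have h1 : |w'.re - w.re| ≤ ‖w' - w‖ := by
          simpa using Complex.abs_re_le_norm (w' - w)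
        have h2 : ‖w' - w‖ < ε := by
          simpa [Complex.dist_eq] using mem_ball_iff_norm.1 hw'
        have := abs_le.1 h1
        have := this.1
        simp only [hε] at *
        linarith
      rw [norm_mul, norm_neg, Complex.norm_real, Real.norm_eq_abs, abs_of_nonneg ht.le,
        norm_exp_rpow ht]
      have h3 : Real.exp (-(w'.re * t)) ≤ Real.exp (-(ε * t)) := by
        apply Real.exp_le_exp.2
        nlinarith
      calc t * (t ^ q * Real.exp (-(w'.re * t)))
          ≤ t * (t ^ q * Real.exp (-(ε * t))) := by
            apply mul_le_mul_of_nonneg_left _ ht.le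
            exact mul_le_mul_of_nonneg_left h3 (Real.rpow_nonneg ht.le q)
        _ = t ^ (q + 1) * Real.exp (-(ε * t)) := by
            rw [Real.rpow_add_one (ne_of_gt ht)]; ring
    · -- derivative
      refine ae_of_all _ fun t w' _ => ?_
      have h1 : HasDerivAt (fun w : ℂ => -w * t) (-(t : ℂ)) w' := by
        simpa using ((hasDerivAt_id w').neg.mul_const (t : ℂ))
      have h2 := (h1.cexp).mul_const ((t ^ q : ℝ) : ℂ)
      exact h2.congr_deriv (by ring)
  have hGdiff : ∀ w ∈ U, DifferentiableAt ℂ G w := by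
    intro w hw
    have hw0 : w ≠ 0 := by rintro rfl; simp [hU] at hw
    refine (differentiableAt_const _).div ?_ ?_
    · exact (differentiableAt_id.cpow (differentiableAt_const _) (Or.inl hw))
    · simp only [ne_eq, Complex.cpow_eq_zero_iff, not_and_or, not_ne_iff]
      exact Or.inl hw0
  have hFanal : AnalyticOnNhd ℂ F U :=
    (DifferentiableOn.analyticOnNhd (fun w hw => (hFdiff w hw).differentiableWithinAt) hUopen)
  have hGanal : AnalyticOnNhd ℂ G U :=
    (DifferentiableOn.analyticOnNhd (fun w hw => (hGdiff w hw).differentiableWithinAt) hUopen)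
  -- agreement on positive reals
  have hreal : ∀ r : ℝ, 0 < r → F r = G r := by
    intro r hr
    have ha : 0 < ((q : ℂ) + 1).re := by simpa using (by linarith : 0 < q + 1)
    have := Complex.integral_cpow_mul_exp_neg_mul_Ioi ha hr
    have hFr : F r = ∫ t in Ioi (0 : ℝ), (t : ℂ) ^ ((q : ℂ) + 1 - 1) * Complex.exp (-(r * t)) := by
      refine setIntegral_congr_fun measurableSet_Ioi fun t ht => ?_
      rw [mem_Ioi] at ht
      rw [add_sub_cancel_right, ← Complex.ofReal_cpow ht.le, mul_comm, neg_mul]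
    rw [hFr, this, hG]
    have harg : Complex.arg r ≠ Real.pi := by
      rw [Complex.arg_ofReal_of_nonneg hr.le]
      exact Real.pi_ne_zero.symm
    rw [one_div, Complex.inv_cpow _ _ harg, inv_mul_eq_div]
    rw [show ((q + 1 : ℝ) : ℂ) = (q : ℂ) + 1 by push_cast; ring, ← Complex.Gamma_ofReal]
    norm_cast
  -- frequently equal near 1
  have htend : Tendsto (fun x : ℝ => (x : ℂ)) (nhdsWithin 1 (Ioi 1)) (nhdsWithin 1 {(1 : ℂ)}ᶜ) := by
    refine tendsto_nhdsWithin_of_tendsto_nhds_of_eventually_within _ ?_ ?_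
    · exact (Complex.continuous_ofReal.tendsto 1).mono_left nhdsWithin_le_nhds
    · filter_upwards [self_mem_nhdsWithin] with x hx
      simp only [mem_compl_iff, mem_singleton_iff]
      exact_mod_cast (ne_of_gt (mem_Ioi.1 hx))
  have hfreq : ∃ᶠ w in nhdsWithin (1 : ℂ) {(1 : ℂ)}ᶜ, F w = G w := by
    refine htend.frequently ?_
    refine Filter.Eventually.frequently ?_
    filter_upwards [self_mem_nhdsWithin] with x hx
    exact hreal x (lt_trans one_pos (mem_Ioi.1 hx))
  have h1U : (1 : ℂ) ∈ U := by simp [hU]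
  have := hFanal.eqOn_of_preconnected_of_frequently_eq hGanal hUconn h1U hfreq
  exact this hb

lemma cGamma_add_nat {x : ℂ} (hx : 0 < x.re) (k : ℕ) :
    Complex.Gamma (x + k) = Complex.Gamma x * (ascPochhammer ℂ k).eval x := by
  induction k with
  | zero => simp
  | succ k ih =>
    have hne : x + k ≠ 0 := by
      intro h
      have : (x + (k : ℂ)).re = 0 := by rw [h]; simp
      simp only [Complex.add_re, Complex.natCast_re] at this
      have : (0 : ℝ) ≤ (k : ℝ) := Nat.cast_nonneg k
      linarith
    have h1 : x + ((k : ℕ) + 1 : ℕ) = (x + k) + 1 := by push_cast; ring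
    rw [h1, Complex.Gamma_add_one _ hne, ih, ascPochhammer_succ_right]
    simp only [Polynomial.eval_mul, Polynomial.eval_add, Polynomial.eval_X,
      Polynomial.eval_natCast]
    ring

lemma poch_neg_nat {n k : ℕ} (hk : k ≤ n) :
    (ascPochhammer ℂ k).eval (-(n : ℂ)) * ((n - k).factorial : ℂ)
      = (-1) ^ k * (n.factorial : ℂ) := by
  rw [ascPochhammer_eval_neg_eq_descPochhammer]
  rw [show ((n : ℂ)) = ((n : ℕ) : ℂ) by norm_cast, descPochhammer_eval_eq_descFactorial]
  rw [mul_assoc]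
  congr 1
  rw [mul_comm]
  rw_mod_cast [Nat.factorial_mul_descFactorial hk]

set_option maxHeartbeats 2000000 in
theorem lagCoef_eq_hypergeometric (τ α : ℝ) (hτ : 0 < τ) (hα : -1 < α)
    (n : ℕ) (z : ℂ) (hz : z.re < 0) :
    lagCoef α τ n z =
      ((Real.Gamma (α / 2 + 1) : ℂ) / ((τ / 2 : ℂ) - z) ^ ((α / 2 + 1 : ℝ) : ℂ)) *
        ((τ ^ ((α + 1) / 2) : ℝ) : ℂ) *
        ((Real.Gamma (n + α + 1) / (Real.Gamma (α + 1) * n.factorial) : ℝ) : ℂ) *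
        ((Real.sqrt (n.factorial / Real.Gamma (n + α + 1)) : ℝ) : ℂ) *
        ∑ k ∈ Finset.range (n + 1),
          ((ascPochhammer ℂ k).eval (-(n : ℂ)) * (ascPochhammer ℂ k).eval ((α : ℂ) / 2 + 1)) /
              ((ascPochhammer ℂ k).eval ((α : ℂ) + 1) * (k.factorial : ℂ)) *
            ((τ : ℂ) / ((τ / 2 : ℂ) - z)) ^ k := by
  set w : ℂ := (τ / 2 : ℂ) - z with hwdef
  have hw : 0 < w.re := by
    have h2 : ((τ : ℂ) / 2).re = τ / 2 := by
      rw [show ((τ : ℂ) / 2) = ((τ / 2 : ℝ) : ℂ) by push_cast; ring, Complex.ofReal_re]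
    simp only [hwdef, Complex.sub_re, h2]
    linarith
  have hw0 : w ≠ 0 := fun h => by rw [h] at hw; simp at hw
  set S : ℂ := ((Real.sqrt (n.factorial / Real.Gamma (n + α + 1)) : ℝ) : ℂ) with hS
  set T : ℂ := ((τ ^ ((α + 1) / 2) : ℝ) : ℂ) with hT
  set C : ℕ → ℂ := fun k => S * T *
      ((-1 : ℂ) ^ k * ((Real.Gamma (n + α + 1) : ℂ) /
        ((Real.Gamma (k + α + 1) : ℂ) * ((n - k).factorial : ℂ))) / (k.factorial : ℂ)) *
      (τ : ℂ) ^ k with hC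
  have hqk : ∀ k : ℕ, (-1 : ℝ) < α / 2 + k := by
    intro k
    have : (0 : ℝ) ≤ (k : ℝ) := Nat.cast_nonneg k
    linarith
  -- Step 1: pointwise identity on Ioi 0
  have hpt : ∀ t ∈ Ioi (0 : ℝ), Complex.exp (z * t) * ((lagFun α τ n t : ℝ) : ℂ)
      = ∑ k ∈ Finset.range (n + 1),
          C k * (Complex.exp (-w * t) * ((t ^ (α / 2 + k) : ℝ) : ℂ)) := by
    intro t ht
    rw [mem_Ioi] at ht
    rw [lagFun, lagPoly]
    push_cast
    rw [Finset.mul_sum, Finset.mul_sum]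
    refine Finset.sum_congr rfl fun k _ => ?_
    have hexp : Complex.exp (z * t) * Complex.exp (-(τ : ℂ) * t / 2)
        = Complex.exp (-w * t) := by
      rw [← Complex.exp_add]
      congr 1
      rw [hwdef]
      ring
    have hrp : ((t ^ (α / 2 + (k : ℝ)) : ℝ) : ℂ) = ((t ^ (α / 2) : ℝ) : ℂ) * (t : ℂ) ^ k := by
      rw [Real.rpow_add ht, Real.rpow_natCast]
      push_cast
      ring
    rw [hrp, hC]
    simp only []
    rw [← hexp]
    ring
  -- Step 2: integrate term by term
  have hint : ∀ k ∈ Finset.range (n + 1), IntegrableOn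
      (fun t : ℝ => C k * (Complex.exp (-w * t) * ((t ^ (α / 2 + k) : ℝ) : ℂ))) (Ioi 0) :=
    fun k _ => (intOn_cexp_rpow hw (hqk k)).const_mul (C k)
  have h2 : lagCoef α τ n z = ∑ k ∈ Finset.range (n + 1),
      C k * ((Real.Gamma (α / 2 + k + 1) : ℂ) / w ^ ((α / 2 + k + 1 : ℝ) : ℂ)) := by
    rw [lagCoef, setIntegral_congr_fun measurableSet_Ioi hpt, integral_finset_sum _ hint]
    refine Finset.sum_congr rfl fun k _ => ?_
    rw [integral_const_mul, laplace_rpow (hqk k) hw]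
  rw [h2]
  -- Step 3: termwise algebra
  rw [show ((Real.Gamma (α / 2 + 1) : ℂ) / w ^ ((α / 2 + 1 : ℝ) : ℂ)) * T *
      ((Real.Gamma (n + α + 1) / (Real.Gamma (α + 1) * n.factorial) : ℝ) : ℂ) * S *
      ∑ k ∈ Finset.range (n + 1),
        ((ascPochhammer ℂ k).eval (-(n : ℂ)) * (ascPochhammer ℂ k).eval ((α : ℂ) / 2 + 1)) /
            ((ascPochhammer ℂ k).eval ((α : ℂ) + 1) * (k.factorial : ℂ)) *
          ((τ : ℂ) / w) ^ k
    = ∑ k ∈ Finset.range (n + 1),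
        ((Real.Gamma (α / 2 + 1) : ℂ) / w ^ ((α / 2 + 1 : ℝ) : ℂ)) * T *
        ((Real.Gamma (n + α + 1) / (Real.Gamma (α + 1) * n.factorial) : ℝ) : ℂ) * S *
        (((ascPochhammer ℂ k).eval (-(n : ℂ)) * (ascPochhammer ℂ k).eval ((α : ℂ) / 2 + 1)) /
            ((ascPochhammer ℂ k).eval ((α : ℂ) + 1) * (k.factorial : ℂ)) *
          ((τ : ℂ) / w) ^ k) from Finset.mul_sum _ _ _]
  refine Finset.sum_congr rfl fun k hk => ?_
  have hkn : k ≤ n := Nat.lt_succ_iff.1 (Finset.mem_range.1 hk)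
  -- Gamma-Pochhammer facts
  have hg1 : (Real.Gamma (α / 2 + k + 1) : ℂ)
      = (Real.Gamma (α / 2 + 1) : ℂ) * (ascPochhammer ℂ k).eval ((α : ℂ) / 2 + 1) := by
    have hx : (0 : ℝ) < ((α / 2 + 1 : ℝ) : ℂ).re := by
      rw [Complex.ofReal_re]; linarith
    have := cGamma_add_nat (x := ((α / 2 + 1 : ℝ) : ℂ)) hx k
    rw [show ((α / 2 + 1 : ℝ) : ℂ) + k = ((α / 2 + k + 1 : ℝ) : ℂ) by push_cast; ring] at this
    rw [Complex.Gamma_ofReal, Complex.Gamma_ofReal] at this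
    rw [this]
    norm_num
  have hg2 : (Real.Gamma (k + α + 1) : ℂ)
      = (Real.Gamma (α + 1) : ℂ) * (ascPochhammer ℂ k).eval ((α : ℂ) + 1) := by
    have hx : (0 : ℝ) < ((α + 1 : ℝ) : ℂ).re := by
      rw [Complex.ofReal_re]; linarith
    have := cGamma_add_nat (x := ((α + 1 : ℝ) : ℂ)) hx k
    rw [show ((α + 1 : ℝ) : ℂ) + k = ((k + α + 1 : ℝ) : ℂ) by push_cast; ring] at this
    rw [Complex.Gamma_ofReal, Complex.Gamma_ofReal] at this
    rw [this]
    norm_num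
  have hg3 := poch_neg_nat (n := n) (k := k) hkn
  have hw4 : w ^ ((α / 2 + k + 1 : ℝ) : ℂ) = w ^ ((α / 2 + 1 : ℝ) : ℂ) * w ^ k := by
    rw [show ((α / 2 + k + 1 : ℝ) : ℂ) = ((α / 2 + 1 : ℝ) : ℂ) + (k : ℂ) by push_cast; ring,
      Complex.cpow_add _ _ hw0, Complex.cpow_natCast]
  -- nonvanishing
  have hGpos : ∀ x : ℝ, 0 < x → Real.Gamma x ≠ 0 := fun x hx => (Real.Gamma_pos_of_pos hx).ne'
  have hga : (Real.Gamma (α + 1) : ℂ) ≠ 0 := by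
    exact_mod_cast hGpos _ (by linarith)
  have hgb : (Real.Gamma (α / 2 + 1) : ℂ) ≠ 0 := by
    exact_mod_cast hGpos _ (by linarith)
  have hgc : (Real.Gamma (k + α + 1) : ℂ) ≠ 0 := by
    have : (0 : ℝ) ≤ (k : ℝ) := Nat.cast_nonneg k
    exact_mod_cast hGpos _ (by linarith)
  have hPb : (ascPochhammer ℂ k).eval ((α : ℂ) + 1) ≠ 0 := by
    intro h
    rw [hg2, h, mul_zero] at hgc
    exact hgc rfl
  have hfk : (k.factorial : ℂ) ≠ 0 := Nat.cast_ne_zero.2 k.factorial_ne_zero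
  have hfnk : ((n - k).factorial : ℂ) ≠ 0 := Nat.cast_ne_zero.2 (n - k).factorial_ne_zero
  have hfn : (n.factorial : ℂ) ≠ 0 := Nat.cast_ne_zero.2 n.factorial_ne_zero
  have hwA : w ^ ((α / 2 + 1 : ℝ) : ℂ) ≠ 0 := by
    simp only [ne_eq, Complex.cpow_eq_zero_iff, not_and_or, not_ne_iff]
    exact Or.inl hw0
  have hg3' : (ascPochhammer ℂ k).eval (-(n : ℂ))
      = (-1) ^ k * (n.factorial : ℂ) / ((n - k).factorial : ℂ) := by
    rw [eq_div_iff hfnk]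
    exact hg3
  simp only [hC, hg1, hg2, hg3', hw4]
  push_cast
  field_simp
  ring_nf
  rw [inv_pow, mul_inv_cancel_right₀ (pow_ne_zero k hw0)]
end

section
/- Let τ > 0, α > −1 be real, n, j ∈ ℕ, and λ ∈ ℂ with Re λ < 0. Then ∫₀^∞ t^j e^{λt} l_{n,τ}^α(t) dt = (Γ(α/2+j+1)/(τ/2−λ)^{α/2+j+1}) · τ^{(α+1)/2} · (Γ(n+α+1)/(Γ(α+1)·n!)) · √(n!/Γ(n+α+1)) · Σ_{k=0}^n ((−n)_k · (α/2+j+1)_k / ((α+1)_k · k!)) · (τ/(τ/2−λ))^k, where (x)_k denotes the ascending Pochhammer symbol and the complex power is the principal branch (note Re(τ/2−λ) > 0). -/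
open MeasureTheory

section LagHelpers

open Set Complex Filter Topology Finset

set_option maxHeartbeats 1000000

lemma lag_integrable_aux {s : ℝ} (hs : 0 < s) {b : ℝ} (hb : 0 < b) :
    IntegrableOn (fun t : ℝ => t ^ (s - 1) * Real.exp (-b * t)) (Ioi 0) := by
  have := integrableOn_rpow_mul_exp_neg_mul_rpow (p := 1) (s := s - 1) (b := b)
    (by linarith) one_pos hb
  simpa [Real.rpow_one] using this

lemma lag_norm_eq {s : ℝ} {w : ℂ} {t : ℝ} (ht : 0 < t) :
    ‖(t : ℂ) ^ ((s : ℂ) - 1) * Complex.exp (-(w * t))‖ = t ^ (s - 1) * Real.exp (-w.re * t) := by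
  rw [norm_mul, Complex.norm_exp,
    Complex.norm_cpow_eq_rpow_re_of_pos ht]
  simp [Complex.sub_re, Complex.ofReal_re, Complex.mul_re, Complex.ofReal_im]


lemma lag_meas {s : ℝ} (w : ℂ) :
    AEStronglyMeasurable (fun t : ℝ => (t : ℂ) ^ ((s : ℂ) - 1) * Complex.exp (-(w * t)))
      (volume.restrict (Ioi 0)) := by
  apply ContinuousOn.aestronglyMeasurable _ measurableSet_Ioi
  apply ContinuousOn.mul
  · intro t ht
    apply ContinuousAt.continuousWithinAt
    exact (continuousAt_cpow_const (by exact Or.inl (by exact_mod_cast ht)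
      : (t:ℂ) ∈ Complex.slitPlane)).comp Complex.continuous_ofReal.continuousAt
  · exact (Complex.continuous_exp.comp ((continuous_const.mul Complex.continuous_ofReal).neg)).continuousOn

lemma lag_integrable {s : ℝ} (hs : 0 < s) {w : ℂ} (hw : 0 < w.re) :
    IntegrableOn (fun t : ℝ => (t : ℂ) ^ ((s : ℂ) - 1) * Complex.exp (-(w * t))) (Ioi 0) := by
  refine Integrable.mono' (lag_integrable_aux hs hw) (lag_meas w) ?_
  filter_upwards [ae_restrict_mem measurableSet_Ioi] with t ht
  rw [lag_norm_eq ht]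

lemma lag_key_integral {s : ℝ} (hs : 0 < s) {w : ℂ} (hw : 0 < w.re) :
    ∫ t in Ioi (0 : ℝ), (t : ℂ) ^ ((s : ℂ) - 1) * Complex.exp (-(w * t)) =
      (Real.Gamma s : ℂ) / w ^ (s : ℂ) := by
  set F : ℂ → ℂ := fun w => ∫ t in Ioi (0 : ℝ), (t : ℂ) ^ ((s : ℂ) - 1) * Complex.exp (-(w * t))
    with hF
  set G : ℂ → ℂ := fun w => (Real.Gamma s : ℂ) / w ^ (s : ℂ) with hG
  set U : Set ℂ := {w : ℂ | 0 < w.re} with hU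
  have hUo : IsOpen U := isOpen_lt continuous_const Complex.continuous_re
  -- F is differentiable on U
  have hFd : DifferentiableOn ℂ F U := by
    intro w₀ hw₀
    have hw₀' : 0 < w₀.re := hw₀
    set ε : ℝ := w₀.re / 2 with hε
    have hεpos : 0 < ε := by positivity
    have hmeas : ∀ᶠ w in 𝓝 w₀, AEStronglyMeasurable
        (fun t : ℝ => (t : ℂ) ^ ((s : ℂ) - 1) * Complex.exp (-(w * t)))
        (volume.restrict (Ioi 0)) := Filter.Eventually.of_forall fun w => lag_meas w
    have hint : Integrable (fun t : ℝ => (t : ℂ) ^ ((s : ℂ) - 1) * Complex.exp (-(w₀ * t)))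
        (volume.restrict (Ioi 0)) := lag_integrable hs (by linarith)
    have hmeas' : AEStronglyMeasurable
        (fun t : ℝ => (t : ℂ) ^ ((s : ℂ) - 1) * (Complex.exp (-(w₀ * t)) * (-(t : ℂ))))
        (volume.restrict (Ioi 0)) := by
      have h0 : AEStronglyMeasurable
          (fun t : ℝ => (t:ℂ) ^ ((((s+1 : ℝ)) : ℂ) - 1) * Complex.exp (-(w₀ * t)))
          (volume.restrict (Ioi 0)) := lag_meas (s := s+1) w₀
      apply AEStronglyMeasurable.congr h0.neg
      filter_upwards [ae_restrict_mem measurableSet_Ioi] with t ht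
      have htne : (t : ℂ) ≠ 0 := by exact_mod_cast (show (0:ℝ) < t from ht).ne'
      have h1 : ((t:ℂ)) ^ ((((s+1 : ℝ)) : ℂ) - 1) = (t:ℂ) ^ ((s:ℂ) - 1) * t := by
        rw [show (((s+1 : ℝ)) : ℂ) - 1 = ((s:ℂ) - 1) + 1 by push_cast; ring,
          Complex.cpow_add _ _ htne, Complex.cpow_one]
      simp only [Pi.neg_apply]
      rw [h1]; ring
    have hbound : ∀ᵐ (t : ℝ) ∂(volume.restrict (Ioi 0)), ∀ w ∈ Metric.ball w₀ ε,
        ‖(t : ℂ) ^ ((s : ℂ) - 1) * (Complex.exp (-(w * t)) * (-(t : ℂ)))‖ ≤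
          t ^ ((s + 1) - 1) * Real.exp (-ε * t) := by
      filter_upwards [ae_restrict_mem measurableSet_Ioi] with t ht w hwball
      have hwre : ε ≤ w.re := by
        have h3 := Complex.abs_re_le_norm (w - w₀)
        rw [Complex.sub_re] at h3
        have h2 : ‖w - w₀‖ < ε := by
          simpa [Complex.dist_eq] using Metric.mem_ball.mp hwball
        have := abs_lt.mp (lt_of_le_of_lt h3 h2)
        simp only [hε] at *; linarith
      have ht' : (0:ℝ) < t := ht
      calc ‖(t : ℂ) ^ ((s : ℂ) - 1) * (Complex.exp (-(w * t)) * (-(t : ℂ)))‖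
          = ‖(t : ℂ) ^ ((s : ℂ) - 1) * Complex.exp (-(w * t))‖ * t := by
            rw [show (t : ℂ) ^ ((s : ℂ) - 1) * (Complex.exp (-(w * t)) * (-(t : ℂ))) =
              -((t : ℂ) ^ ((s : ℂ) - 1) * Complex.exp (-(w * t)) * t) by ring, norm_neg,
              norm_mul]
            simp [Complex.norm_real, abs_of_pos ht']
        _ = t ^ (s - 1) * Real.exp (-w.re * t) * t := by rw [lag_norm_eq ht']
        _ = t ^ ((s + 1) - 1) * Real.exp (-w.re * t) := by
            rw [show (s+1)-1 = (s-1)+1 by ring, Real.rpow_add ht', Real.rpow_one]; ring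
        _ ≤ t ^ ((s + 1) - 1) * Real.exp (-ε * t) := by
            apply mul_le_mul_of_nonneg_left _ (Real.rpow_nonneg ht'.le _)
            apply Real.exp_le_exp.mpr
            nlinarith
    have hbint : Integrable (fun t : ℝ => t ^ ((s + 1) - 1) * Real.exp (-ε * t))
        (volume.restrict (Ioi 0)) := lag_integrable_aux (by linarith) hεpos
    have hderiv : ∀ᵐ (t : ℝ) ∂(volume.restrict (Ioi 0)), ∀ w ∈ Metric.ball w₀ ε,
        HasDerivAt (fun w : ℂ => (t : ℂ) ^ ((s : ℂ) - 1) * Complex.exp (-(w * t)))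
          ((t : ℂ) ^ ((s : ℂ) - 1) * (Complex.exp (-(w * t)) * (-(t : ℂ)))) w := by
      filter_upwards with t w _
      have h1 : HasDerivAt (fun w : ℂ => -(w * (t:ℂ))) (-(t:ℂ)) w := by
        simpa using (((hasDerivAt_id w).mul_const (t:ℂ)).const_mul (-1 : ℂ))
      exact (h1.cexp).const_mul ((t:ℂ) ^ ((s : ℂ) - 1))
    have key := hasDerivAt_integral_of_dominated_loc_of_deriv_le (Metric.ball_mem_nhds w₀ hεpos) hmeas hint hmeas'
      hbound hbint hderiv
    exact (key.2.differentiableAt).differentiableWithinAt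
  have hGd : DifferentiableOn ℂ G U := by
    intro w hwU
    have hwre : 0 < w.re := hwU
    have hne : w ≠ 0 := by intro h; rw [h] at hwre; simp at hwre
    apply DifferentiableAt.differentiableWithinAt
    apply DifferentiableAt.div (differentiableAt_const _)
    · exact (differentiableAt_id.cpow (differentiableAt_const _) (Or.inl hwre))
    · rw [Complex.cpow_def_of_ne_zero hne]; exact Complex.exp_ne_zero _
  have hFG_real : ∀ r : ℝ, 0 < r → F (r : ℂ) = G (r : ℂ) := by
    intro r hr
    have h := integral_cpow_mul_exp_neg_mul_Ioi (a := (s : ℂ)) (r := r) (by simpa using hs) hr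
    rw [hF]; simp only
    rw [h, hG]; simp only
    rw [Complex.Gamma_ofReal, one_div,
      Complex.inv_cpow _ _ (by rw [Complex.arg_ofReal_of_nonneg hr.le]; exact Real.pi_ne_zero.symm)]
    ring
  have hEq : EqOn F G U := by
    apply (hFd.analyticOnNhd hUo).eqOn_of_preconnected_of_frequently_eq
      (hGd.analyticOnNhd hUo) ((convex_halfSpace_re_gt 0).isPreconnected)
      (show (1:ℂ) ∈ U by simp [hU])
    have hu : Tendsto (fun m : ℕ => ((1 + (1 : ℝ) / (m + 1) : ℝ) : ℂ)) atTop (𝓝[≠] (1:ℂ)) := by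
      rw [tendsto_nhdsWithin_iff]
      constructor
      · have h1 : Tendsto (fun m : ℕ => (1 + (1:ℝ)/(m+1) : ℝ)) atTop (𝓝 1) := by
          have : Tendsto (fun n : ℕ => 1 / ((n : ℝ) + 1)) atTop (𝓝 0) :=
            tendsto_one_div_add_atTop_nhds_zero_nat
          simpa using (tendsto_const_nhds (x := (1:ℝ))).add this
        have h2 := (Complex.continuous_ofReal.tendsto (1:ℝ)).comp h1
        simpa [Function.comp_def] using h2
      · filter_upwards with m
        simp only [mem_compl_iff, mem_singleton_iff]
        intro h
        have h2 : (1 + (1:ℝ)/(m+1)) = 1 := by exact_mod_cast h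
        have h3 : (0:ℝ) < 1/(m+1) := by positivity
        linarith
    exact hu.frequently (Frequently.of_forall fun m =>
      hFG_real _ (by positivity))
  exact hEq hw

lemma lag_gamma_asc {x : ℝ} (hx : 0 < x) (k : ℕ) :
    Real.Gamma (x + k) = Real.Gamma x * (ascPochhammer ℝ k).eval x := by
  induction k with
  | zero => simp
  | succ k ih =>
    have h1 : (x + (k + 1 : ℕ) : ℝ) = (x + k) + 1 := by push_cast; ring
    rw [h1, Real.Gamma_add_one (by positivity), ih, ascPochhammer_succ_eval]
    ring

lemma lag_asc_cast (k : ℕ) (x : ℝ) :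
    (((ascPochhammer ℝ k).eval x : ℝ) : ℂ) = (ascPochhammer ℂ k).eval (x : ℂ) := by
  induction k with
  | zero => simp
  | succ k ih => rw [ascPochhammer_succ_eval, ascPochhammer_succ_eval]; push_cast [ih]; ring

lemma lag_asc_pos {x : ℝ} (hx : 0 < x) (k : ℕ) : 0 < (ascPochhammer ℝ k).eval x := by
  induction k with
  | zero => simp
  | succ k ih =>
    rw [ascPochhammer_succ_eval]
    positivity

lemma lag_asc_neg (n : ℕ) : ∀ k : ℕ, k ≤ n →
    (ascPochhammer ℂ k).eval (-(n : ℂ)) =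
      (-1) ^ k * (n.factorial : ℂ) / ((n - k).factorial : ℂ) := by
  intro k
  induction k with
  | zero =>
    simp [Nat.factorial_ne_zero,
      div_self (Nat.cast_ne_zero.mpr (Nat.factorial_ne_zero n) : (n.factorial:ℂ) ≠ 0)]
  | succ k ih =>
    intro hk
    have hk' : k ≤ n := Nat.le_of_succ_le hk
    have hkn : k < n := hk
    rw [ascPochhammer_succ_eval, ih hk']
    have hfac : ((n - k).factorial : ℂ) = ((n - k : ℕ) : ℂ) * ((n - (k+1)).factorial : ℂ) := by
      have : n - k = (n - (k + 1)) + 1 := by omega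
      rw [this, Nat.factorial_succ]
      push_cast
      ring
    have hcast : ((n - k : ℕ) : ℂ) = (n : ℂ) - k := by
      push_cast [Nat.cast_sub hk']
      ring
    have h1 : ((n - k).factorial : ℂ) ≠ 0 := Nat.cast_ne_zero.mpr (Nat.factorial_ne_zero _)
    have h2 : ((n - (k+1)).factorial : ℂ) ≠ 0 := Nat.cast_ne_zero.mpr (Nat.factorial_ne_zero _)
    have h3 : ((n : ℂ) - k) ≠ 0 := by
      rw [← hcast]
      exact Nat.cast_ne_zero.mpr (by omega)
    rw [hfac, hcast]
    field_simp
    ring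

end LagHelpers

open Set Complex Filter Topology Finset in
set_option maxHeartbeats 1000000 in
theorem integral_pow_exp_lagFun (τ α : ℝ) (hτ : 0 < τ) (hα : -1 < α)
    (n j : ℕ) (z : ℂ) (hz : z.re < 0) :
    (∫ t in Set.Ioi (0 : ℝ), (t : ℂ) ^ j * Complex.exp (z * t) * (lagFun α τ n t : ℂ)) =
      ((Real.Gamma (α / 2 + j + 1) : ℂ) / ((τ / 2 : ℂ) - z) ^ ((α / 2 + j + 1 : ℝ) : ℂ)) *
        ((τ ^ ((α + 1) / 2) : ℝ) : ℂ) *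
        ((Real.Gamma (n + α + 1) / (Real.Gamma (α + 1) * n.factorial) : ℝ) : ℂ) *
        ((Real.sqrt (n.factorial / Real.Gamma (n + α + 1)) : ℝ) : ℂ) *
        ∑ k ∈ Finset.range (n + 1),
          ((ascPochhammer ℂ k).eval (-(n : ℂ)) *
              (ascPochhammer ℂ k).eval ((α : ℂ) / 2 + j + 1)) /
              ((ascPochhammer ℂ k).eval ((α : ℂ) + 1) * (k.factorial : ℂ)) *
            ((τ : ℂ) / ((τ / 2 : ℂ) - z)) ^ k := by
  set w : ℂ := (τ / 2 : ℂ) - z with hwdef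
  have hwre : w.re = τ / 2 - z.re := by
    simp [hwdef, Complex.sub_re, Complex.div_ofNat_re]
  have hw : 0 < w.re := by rw [hwre]; linarith
  have hwne : w ≠ 0 := by
    intro h; rw [h] at hw; simp at hw
  have hjnn : (0:ℝ) ≤ (j:ℝ) := Nat.cast_nonneg j
  have hxpos : (0:ℝ) < α/2 + j + 1 := by linarith
  have hαpos : (0:ℝ) < α + 1 := by linarith
  have hsk : ∀ k : ℕ, (0:ℝ) < α/2 + j + k + 1 := by
    intro k; have : (0:ℝ) ≤ (k:ℝ) := Nat.cast_nonneg k; linarith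
  set C : ℝ := Real.sqrt (n.factorial / Real.Gamma (n + α + 1)) with hC
  have hpt : ∀ t ∈ Ioi (0:ℝ),
      (t : ℂ) ^ j * Complex.exp (z * t) * (lagFun α τ n t : ℂ) =
      ∑ k ∈ Finset.range (n + 1),
        ((C * τ ^ ((α + 1) / 2) *
            ((-1 : ℝ) ^ k * (Real.Gamma (n + α + 1) /
              (Real.Gamma (k + α + 1) * (n - k).factorial)) / k.factorial) * τ ^ k : ℝ) : ℂ) *
          ((t : ℂ) ^ (((α/2 + j + k + 1 : ℝ) : ℂ) - 1) * Complex.exp (-(w * t))) := by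
    intro t ht
    have ht' : (0:ℝ) < t := ht
    have htne : (t : ℂ) ≠ 0 := by exact_mod_cast ht'.ne'
    have hexp : ∀ k : ℕ, True := fun _ => trivial
    rw [lagFun, lagPoly]
    push_cast
    simp only [Finset.mul_sum]
    refine Finset.sum_congr rfl fun k hk => ?_
    have hpow : (t : ℂ) ^ ((α:ℂ)/2 + j + k + 1 - 1) =
        (t : ℂ) ^ j * ((t ^ (α/2) : ℝ) : ℂ) * (t : ℂ) ^ k := by
      rw [Complex.ofReal_cpow ht'.le, ← Complex.cpow_natCast _ j, ← Complex.cpow_natCast _ k,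
        ← Complex.cpow_add _ _ htne, ← Complex.cpow_add _ _ htne]
      congr 1
      push_cast
      ring
    have hexp2 : Complex.exp (-(w * t)) = Complex.exp (z * t) * Complex.exp (-(τ:ℂ) * t / 2) := by
      rw [← Complex.exp_add]
      congr 1
      rw [hwdef]
      push_cast
      ring
    rw [hexp2, ← hC, hpow]
    push_cast
    ring
  rw [MeasureTheory.setIntegral_congr_fun measurableSet_Ioi hpt,
    MeasureTheory.integral_finset_sum _
      (fun k _ => ((lag_integrable (hsk k) hw).const_mul _))]
  simp_rw [MeasureTheory.integral_const_mul, lag_key_integral (hsk _) hw]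
  rw [Finset.mul_sum]
  refine Finset.sum_congr rfl fun k hk => ?_
  have hkn : k ≤ n := Nat.lt_succ_iff.mp (Finset.mem_range.mp hk)
  -- Gamma identities
  have hG1 : Real.Gamma (α/2 + j + k + 1) =
      Real.Gamma (α/2 + j + 1) * (ascPochhammer ℝ k).eval (α/2 + j + 1) := by
    have := lag_gamma_asc hxpos k
    rw [show α/2 + (j:ℝ) + 1 + (k:ℝ) = α/2 + j + k + 1 by ring] at this
    exact this
  have hG2 : Real.Gamma ((k:ℝ) + α + 1) =
      Real.Gamma (α + 1) * (ascPochhammer ℝ k).eval (α + 1) := by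
    have := lag_gamma_asc hαpos k
    rw [show α + 1 + (k:ℝ) = (k:ℝ) + α + 1 by ring] at this
    exact this
  have hW : w ^ (((α/2 + j + k + 1 : ℝ)) : ℂ) =
      w ^ (((α/2 + j + 1 : ℝ)) : ℂ) * w ^ k := by
    rw [← Complex.cpow_natCast w k, ← Complex.cpow_add _ _ hwne]
    congr 1
    push_cast
    ring
  have hneg := lag_asc_neg n k hkn
  have hcast1 : ((α:ℂ)/2 + j + 1) = (((α/2 + j + 1 : ℝ)) : ℂ) := by push_cast; ring
  have hcast2 : ((α:ℂ) + 1) = (((α + 1 : ℝ)) : ℂ) := by push_cast; ring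
  -- nonzero facts
  have hne1 : (Real.Gamma (α + 1) : ℂ) ≠ 0 :=
    Complex.ofReal_ne_zero.mpr (Real.Gamma_pos_of_pos hαpos).ne'
  have hne2 : (((ascPochhammer ℝ k).eval (α + 1) : ℝ) : ℂ) ≠ 0 :=
    Complex.ofReal_ne_zero.mpr (lag_asc_pos hαpos k).ne'
  have hne3 : ((k.factorial : ℝ) : ℂ) ≠ 0 := by
    exact_mod_cast Nat.cast_ne_zero.mpr (Nat.factorial_ne_zero k)
  have hne4 : ((n.factorial : ℝ) : ℂ) ≠ 0 := by
    exact_mod_cast Nat.cast_ne_zero.mpr (Nat.factorial_ne_zero n)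
  have hne5 : (((n-k).factorial : ℝ) : ℂ) ≠ 0 := by
    exact_mod_cast Nat.cast_ne_zero.mpr (Nat.factorial_ne_zero (n-k))
  have hne6 : w ^ (((α/2 + j + 1 : ℝ)) : ℂ) ≠ 0 := by
    rw [Complex.cpow_def_of_ne_zero hwne]; exact Complex.exp_ne_zero _
  have hne7 : w ^ k ≠ 0 := pow_ne_zero _ hwne
  rw [hW, hneg, hcast1, hcast2, ← lag_asc_cast, ← lag_asc_cast, div_pow]
  have hne4' : ((n.factorial : ℕ) : ℂ) ≠ 0 := Nat.cast_ne_zero.mpr (Nat.factorial_ne_zero n)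
  push_cast [hG1, hG2]
  field_simp
end

section
/- Let A be an M×M complex matrix all of whose eigenvalues have negative real part, let λ be an eigenvalue of A, and let τ > 0, α > −1, N ∈ ℕ. Then ζ(N,τ,α,λ) ≤ ∫₀^∞ ‖exp(tA) − Σ_{n=0}^N S_{n,τ,α,A} · l_{n,τ}^α(t)‖_F² dt; equivalently, √(max_{λ∈σ(A)} ζ(N,τ,α,λ)) ≤ ‖H_A − H_{N,τ,α,A}‖_{L²[0,∞)}. -/
open MeasureTheory Set

/-- `t^k e^{-ct} ≤ k!/c^k` for `t ≥ 0`, `c > 0`. -/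
lemma pow_mul_exp_neg_le (k : ℕ) {c t : ℝ} (hc : 0 < c) (ht : 0 ≤ t) :
    t ^ k * Real.exp (-(c * t)) ≤ k.factorial / c ^ k := by
  have hx : (0:ℝ) ≤ c * t := mul_nonneg hc.le ht
  have h1 : (c * t) ^ k / k.factorial ≤ Real.exp (c * t) := by
    calc (c * t) ^ k / k.factorial
        ≤ ∑ i ∈ Finset.range (k + 1), (c * t) ^ i / i.factorial := by
          exact Finset.single_le_sum (f := fun i => (c*t)^i / i.factorial)
            (fun i _ => by positivity) (Finset.self_mem_range_succ k)
      _ ≤ Real.exp (c * t) := Real.sum_le_exp_of_nonneg hx _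
  have h2 : (c * t) ^ k ≤ k.factorial * Real.exp (c * t) := by
    rw [div_le_iff₀ (by positivity : (0:ℝ) < (k.factorial:ℝ))] at h1
    linarith [h1]
  have hck : (0:ℝ) < c ^ k := by positivity
  rw [mul_pow] at h2
  have := Real.exp_pos (c * t)
  rw [Real.exp_neg]
  rw [← div_eq_mul_inv, div_le_div_iff₀ this hck]
  nlinarith [this.le]

lemma continuousOn_rpow_mul_exp (β γ : ℝ) :
    ContinuousOn (fun t : ℝ => t ^ β * Real.exp (-(γ * t))) (Ioi 0) := by
  apply ContinuousOn.mul
  · intro t ht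
    exact (Real.continuousAt_rpow_const t β (Or.inl (ne_of_gt ht))).continuousWithinAt
  · exact (Real.continuous_exp.comp (continuous_const.mul continuous_id).neg).continuousOn

/-- `t^β e^{-γt}` is integrable on `(0,∞)` for `β > -1`, `γ > 0`. -/
lemma integrableOn_rpow_mul_exp {β γ : ℝ} (hβ : -1 < β) (hγ : 0 < γ) :
    IntegrableOn (fun t : ℝ => t ^ β * Real.exp (-(γ * t))) (Ioi 0) := by
  have hcont := continuousOn_rpow_mul_exp β γ
  have h01 : IntegrableOn (fun t : ℝ => t ^ β * Real.exp (-(γ * t))) (Ioc 0 1) := by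
    have hbase : IntegrableOn (fun t : ℝ => t ^ β) (Ioc (0:ℝ) 1) := by
      have := intervalIntegral.intervalIntegrable_rpow' (a := 0) (b := 1) hβ
      rwa [intervalIntegrable_iff_integrableOn_Ioc_of_le zero_le_one] at this
    refine hbase.integrable.mono' ?_ ?_
    · exact (hcont.mono Ioc_subset_Ioi_self).aestronglyMeasurable measurableSet_Ioc
    · filter_upwards [ae_restrict_mem measurableSet_Ioc] with t ht
      have h1 : (0:ℝ) ≤ t ^ β := Real.rpow_nonneg ht.1.le β
      have h2 : Real.exp (-(γ * t)) ≤ 1 := by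
        rw [Real.exp_le_one_iff]
        nlinarith [ht.1.le]
      rw [Real.norm_eq_abs, abs_mul, abs_of_nonneg h1, abs_of_pos (Real.exp_pos _)]
      nlinarith
  have h1i : IntegrableOn (fun t : ℝ => t ^ β * Real.exp (-(γ * t))) (Ioi 1) := by
    set n : ℕ := ⌈β⌉₊ + 1
    have hβn : β ≤ (n : ℝ) := le_trans (Nat.le_ceil β) (by exact_mod_cast Nat.le_succ _)
    have hexp : IntegrableOn (fun t : ℝ => Real.exp (-(γ/2) * t)) (Ioi 1) :=
      exp_neg_integrableOn_Ioi 1 (by linarith)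
    refine ((hexp.integrable.const_mul ((n.factorial : ℝ) / (γ/2) ^ n)).mono'
      ((hcont.mono (Ioi_subset_Ioi zero_le_one)).aestronglyMeasurable
        measurableSet_Ioi) ?_)
    filter_upwards [ae_restrict_mem measurableSet_Ioi] with t ht
    have ht1 : (1:ℝ) ≤ t := ht.le
    have ht0 : (0:ℝ) ≤ t := by linarith
    have h1 : t ^ β ≤ t ^ (n : ℝ) := Real.rpow_le_rpow_of_exponent_le ht1 hβn
    have h2 : t ^ (n:ℝ) = t ^ n := by rw [Real.rpow_natCast]
    have h3 : t ^ n * Real.exp (-((γ/2) * t)) ≤ n.factorial / (γ/2) ^ n :=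
      pow_mul_exp_neg_le n (by linarith) ht0
    have h4 : Real.exp (-(γ * t)) = Real.exp (-((γ/2) * t)) * Real.exp (-((γ/2)*t)) := by
      rw [← Real.exp_add]; ring_nf
    have h5 : (0:ℝ) ≤ t ^ β := Real.rpow_nonneg ht0 β
    rw [Real.norm_eq_abs, abs_mul, abs_of_nonneg h5, abs_of_pos (Real.exp_pos _)]
    calc t ^ β * Real.exp (-(γ * t))
        ≤ t ^ n * Real.exp (-(γ * t)) := by
          apply mul_le_mul_of_nonneg_right _ (Real.exp_pos _).le
          rw [← h2]; exact h1
      _ = (t ^ n * Real.exp (-((γ/2) * t))) * Real.exp (-((γ/2) * t)) := by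
          rw [h4]; ring
      _ ≤ (n.factorial / (γ/2) ^ n) * Real.exp (-(γ/2) * t) := by
          rw [neg_mul]
          exact mul_le_mul_of_nonneg_right h3 (Real.exp_pos _).le
  have : (Ioi (0:ℝ)) = Ioc 0 1 ∪ Ioi 1 := (Ioc_union_Ioi_eq_Ioi zero_le_one).symm
  rw [this]
  exact h01.union h1i

lemma lagPoly_le (α : ℝ) (n : ℕ) :
    ∃ K : ℝ, 0 ≤ K ∧ ∀ x : ℝ, 0 ≤ x → |lagPoly α n x| ≤ K * Real.exp (x / 4) := by
  classical
  refine ⟨∑ k ∈ Finset.range (n + 1),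
    |Real.Gamma (n + α + 1) / (Real.Gamma (k + α + 1) * (n - k).factorial)| * 4 ^ k,
    Finset.sum_nonneg fun k _ => by positivity, fun x hx => ?_⟩
  rw [lagPoly]
  calc |∑ k ∈ Finset.range (n + 1), (-1:ℝ)^k *
        (Real.Gamma (n + α + 1) / (Real.Gamma (k + α + 1) * (n - k).factorial)) * x ^ k /
        (k.factorial : ℝ)|
      ≤ ∑ k ∈ Finset.range (n + 1), |(-1:ℝ)^k *
        (Real.Gamma (n + α + 1) / (Real.Gamma (k + α + 1) * (n - k).factorial)) * x ^ k /
        (k.factorial : ℝ)| := Finset.abs_sum_le_sum_abs _ _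
    _ ≤ ∑ k ∈ Finset.range (n + 1),
        (|Real.Gamma (n + α + 1) / (Real.Gamma (k + α + 1) * (n - k).factorial)| * 4 ^ k) *
          Real.exp (x / 4) := by
        apply Finset.sum_le_sum
        intro k _
        have hxk : x ^ k ≤ k.factorial * 4 ^ k * Real.exp (x / 4) := by
          have h := pow_mul_exp_neg_le k (c := (4:ℝ)⁻¹) (t := x) (by norm_num) hx
          have hE : (0:ℝ) < Real.exp (-((4:ℝ)⁻¹ * x)) := Real.exp_pos _
          have h2 : x ^ k ≤ k.factorial / ((4:ℝ)⁻¹) ^ k * Real.exp ((4:ℝ)⁻¹ * x) := by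
            rw [Real.exp_neg] at h
            have hcancel : (Real.exp ((4:ℝ)⁻¹*x))⁻¹ * Real.exp ((4:ℝ)⁻¹*x) = 1 :=
              inv_mul_cancel₀ (ne_of_gt (Real.exp_pos _))
            calc x ^ k = x^k * ((Real.exp ((4:ℝ)⁻¹*x))⁻¹ * Real.exp ((4:ℝ)⁻¹*x)) := by
                  rw [hcancel, mul_one]
              _ = (x^k * (Real.exp ((4:ℝ)⁻¹*x))⁻¹) * Real.exp ((4:ℝ)⁻¹*x) := by ring
              _ ≤ _ := mul_le_mul_of_nonneg_right h (Real.exp_pos _).le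
          have : (k.factorial : ℝ) / ((4:ℝ)⁻¹) ^ k = k.factorial * 4 ^ k := by
            rw [inv_pow, div_inv_eq_mul]
          rw [this] at h2
          convert h2 using 3
          · ring
        rw [abs_div, abs_mul, abs_mul, abs_pow, abs_neg, abs_one, one_pow, one_mul,
          abs_of_nonneg (pow_nonneg hx k), Nat.abs_cast]
        rw [div_le_iff₀ (by positivity : (0:ℝ) < (k.factorial:ℝ))]
        calc |Real.Gamma (n + α + 1) / (Real.Gamma (k + α + 1) * (n - k).factorial)| * x ^ k
            ≤ |Real.Gamma (n + α + 1) / (Real.Gamma (k + α + 1) * (n - k).factorial)| *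
              (k.factorial * 4 ^ k * Real.exp (x / 4)) := by
              exact mul_le_mul_of_nonneg_left hxk (abs_nonneg _)
          _ = |Real.Gamma (n + α + 1) / (Real.Gamma (k + α + 1) * (n - k).factorial)| * 4 ^ k *
              Real.exp (x / 4) * k.factorial := by ring
    _ = (∑ k ∈ Finset.range (n + 1),
        |Real.Gamma (n + α + 1) / (Real.Gamma (k + α + 1) * (n - k).factorial)| * 4 ^ k) *
          Real.exp (x / 4) := by rw [Finset.sum_mul]

lemma lagPoly_continuous (α : ℝ) (n : ℕ) : Continuous (lagPoly α n) := by
  unfold lagPoly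
  exact continuous_finset_sum _ fun k _ => by fun_prop

lemma lagFun_continuousOn (α τ : ℝ) (n : ℕ) : ContinuousOn (lagFun α τ n) (Ioi 0) := by
  unfold lagFun
  apply ContinuousOn.mul
  apply ContinuousOn.mul
  · apply ContinuousOn.mul continuousOn_const
    intro t ht
    exact (Real.continuousAt_rpow_const t (α/2) (Or.inl (ne_of_gt ht))).continuousWithinAt
  · fun_prop
  · exact ((lagPoly_continuous α n).comp (continuous_const.mul continuous_id)).continuousOn

/-- The master envelope for Laguerre functions. -/
lemma lagFun_le (α τ : ℝ) (hτ : 0 < τ) (n : ℕ) :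
    ∃ C : ℝ, 0 ≤ C ∧ ∀ t : ℝ, 0 < t →
      |lagFun α τ n t| ≤ C * (t ^ (α / 2) * Real.exp (-(τ / 4 * t))) := by
  obtain ⟨K, hK0, hK⟩ := lagPoly_le α n
  set c₁ : ℝ := Real.sqrt (n.factorial / Real.Gamma (n + α + 1)) * τ ^ ((α + 1) / 2)
  refine ⟨|c₁| * K, by positivity, fun t ht => ?_⟩
  have htα : (0:ℝ) ≤ t ^ (α/2) := Real.rpow_nonneg ht.le _
  have hP : |lagPoly α n (τ * t)| ≤ K * Real.exp (τ * t / 4) :=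
    hK _ (by positivity)
  have hexp : Real.exp (-τ * t / 2) * Real.exp (τ * t / 4) = Real.exp (-(τ / 4 * t)) := by
    rw [← Real.exp_add]; ring_nf
  have h1 : |lagFun α τ n t| ≤ |c₁| * (t ^ (α/2) * Real.exp (-τ * t / 2) *
      (K * Real.exp (τ * t / 4))) := by
    have he : lagFun α τ n t = c₁ * (t ^ (α / 2) * Real.exp (-τ * t / 2) *
        lagPoly α n (τ * t)) := by rw [lagFun]; ring
    rw [he, abs_mul, abs_mul, abs_mul, abs_mul, abs_of_nonneg htα,
      abs_of_pos (Real.exp_pos _)]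
    exact mul_le_mul_of_nonneg_left
      (mul_le_mul_of_nonneg_left hP (by positivity)) (by positivity)
  calc |lagFun α τ n t| ≤ _ := h1
    _ = |c₁| * K * (t ^ (α/2) * (Real.exp (-τ * t / 2) * Real.exp (τ * t / 4))) := by ring
    _ = |c₁| * K * (t ^ (α/2) * Real.exp (-(τ / 4 * t))) := by rw [hexp]

section MatrixPart

open scoped Matrix

variable {M : ℕ}

/-- `exp B *ᵥ u` as a series. -/
lemma exp_mulVec (B : Matrix (Fin M) (Fin M) ℂ) (u : Fin M → ℂ) :
    NormedSpace.exp B *ᵥ u = ∑' n : ℕ, ((n.factorial : ℂ)⁻¹ • ((B ^ n) *ᵥ u)) := by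
  letI : SeminormedRing (Matrix (Fin M) (Fin M) ℂ) := Matrix.linftyOpSemiNormedRing
  letI : NormedRing (Matrix (Fin M) (Fin M) ℂ) := Matrix.linftyOpNormedRing
  letI : NormedAlgebra ℂ (Matrix (Fin M) (Fin M) ℂ) := Matrix.linftyOpNormedAlgebra
  let L : Matrix (Fin M) (Fin M) ℂ →ₗ[ℂ] (Fin M → ℂ) :=
    { toFun := fun C => C *ᵥ u, map_add' := fun C D => Matrix.add_mulVec C D u,
      map_smul' := fun c C => Matrix.smul_mulVec c C u }
  have hL : Continuous L := LinearMap.continuous_of_finiteDimensional L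
  have hsum := NormedSpace.expSeries_summable' (𝕂 := ℂ) B
  have hmap := (hsum.hasSum.map L.toAddMonoidHom hL).tsum_eq
  have : NormedSpace.exp B = ∑' n : ℕ, ((n.factorial : ℂ)⁻¹ • B ^ n) := by
    rw [NormedSpace.exp_eq_tsum ℂ]
  have hmap' : (∑' n : ℕ, L ((n.factorial:ℂ)⁻¹ • B ^ n))
      = L (∑' n : ℕ, ((n.factorial:ℂ)⁻¹ • B ^ n)) := hmap
  rw [this]
  change L _ = _
  rw [← hmap']
  congr 1
  funext n
  show (((n.factorial:ℂ)⁻¹ • B ^ n) *ᵥ u) = (n.factorial:ℂ)⁻¹ • (B ^ n *ᵥ u)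
  exact Matrix.smul_mulVec _ _ _

/-- `exp (t•A)` applied to an eigenvector. -/
lemma exp_mulVec_eigen (A : Matrix (Fin M) (Fin M) ℂ) {lam : ℂ} {u : Fin M → ℂ}
    (hu : A *ᵥ u = lam • u) (t : ℝ) :
    NormedSpace.exp ((t : ℂ) • A) *ᵥ u = Complex.exp ((t : ℂ) * lam) • u := by
  have hpow : ∀ n : ℕ, ((t:ℂ) • A) ^ n *ᵥ u = (((t:ℂ) * lam) ^ n) • u := by
    intro n
    induction n with
    | zero => simp
    | succ n ih =>
      rw [pow_succ, ← Matrix.mulVec_mulVec, Matrix.smul_mulVec, hu, smul_smul,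
        Matrix.mulVec_smul, ih, smul_smul, pow_succ]
      ring_nf
  rw [exp_mulVec]
  have h1 : ∀ n : ℕ, (n.factorial : ℂ)⁻¹ • (((t:ℂ) • A) ^ n *ᵥ u)
      = ((n.factorial : ℂ)⁻¹ • ((t:ℂ) * lam) ^ n) • u := by
    intro n; rw [hpow n, smul_smul, smul_eq_mul]
  simp_rw [h1]
  rw [Summable.tsum_smul_const (NormedSpace.expSeries_summable' (𝕂 := ℂ) ((t:ℂ) * lam))]
  congr 1
  rw [Complex.exp_eq_exp_ℂ, NormedSpace.exp_eq_tsum ℂ]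


/-- Decay of the matrix exponential, columnwise. -/
lemma exp_decay_vec (A : Matrix (Fin M) (Fin M) ℂ)
    (hA : ∀ μ ∈ spectrum ℂ A, μ.re < 0) (x : Fin M → ℂ) :
    Continuous (fun t : ℝ => NormedSpace.exp ((t:ℂ) • A) *ᵥ x) ∧
      ∃ c C : ℝ, 0 < c ∧ 0 ≤ C ∧ ∀ t : ℝ, 0 ≤ t →
        ‖NormedSpace.exp ((t:ℂ) • A) *ᵥ x‖ ≤ C * Real.exp (-(c * t)) := by
  letI : SeminormedRing (Matrix (Fin M) (Fin M) ℂ) := Matrix.linftyOpSemiNormedRing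
  letI : NormedRing (Matrix (Fin M) (Fin M) ℂ) := Matrix.linftyOpNormedRing
  letI : NormedAlgebra ℂ (Matrix (Fin M) (Fin M) ℂ) := Matrix.linftyOpNormedAlgebra
  set Q : (Fin M → ℂ) → Prop := fun y =>
    Continuous (fun t : ℝ => NormedSpace.exp ((t:ℂ) • A) *ᵥ y) ∧
      ∃ c C : ℝ, 0 < c ∧ 0 ≤ C ∧ ∀ t : ℝ, 0 ≤ t →
        ‖NormedSpace.exp ((t:ℂ) • A) *ᵥ y‖ ≤ C * Real.exp (-(c * t)) with hQ
  have hQ0 : Q 0 := by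
    constructor
    · simp only [Matrix.mulVec_zero]
      exact continuous_const
    · exact ⟨1, 0, one_pos, le_refl 0, fun t ht => by
        simp [Matrix.mulVec_zero]⟩
  have hQadd : ∀ y z, Q y → Q z → Q (y + z) := by
    rintro y z ⟨hyc, cy, Cy, hcy, hCy, hy⟩ ⟨hzc, cz, Cz, hcz, hCz, hz⟩
    constructor
    · simp only [Matrix.mulVec_add]
      exact hyc.add hzc
    · refine ⟨min cy cz, Cy + Cz, lt_min hcy hcz, by linarith, fun t ht => ?_⟩
      have h1 : Real.exp (-(cy * t)) ≤ Real.exp (-(min cy cz * t)) := by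
        apply Real.exp_le_exp.2
        have : min cy cz * t ≤ cy * t :=
          mul_le_mul_of_nonneg_right (min_le_left _ _) ht
        linarith
      have h2 : Real.exp (-(cz * t)) ≤ Real.exp (-(min cy cz * t)) := by
        apply Real.exp_le_exp.2
        have : min cy cz * t ≤ cz * t :=
          mul_le_mul_of_nonneg_right (min_le_right _ _) ht
        linarith
      calc ‖NormedSpace.exp ((t:ℂ) • A) *ᵥ (y + z)‖
          = ‖NormedSpace.exp ((t:ℂ) • A) *ᵥ y + NormedSpace.exp ((t:ℂ) • A) *ᵥ z‖ := by
            rw [Matrix.mulVec_add]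
        _ ≤ ‖NormedSpace.exp ((t:ℂ) • A) *ᵥ y‖ + ‖NormedSpace.exp ((t:ℂ) • A) *ᵥ z‖ :=
            norm_add_le _ _
        _ ≤ Cy * Real.exp (-(cy * t)) + Cz * Real.exp (-(cz * t)) :=
            add_le_add (hy t ht) (hz t ht)
        _ ≤ Cy * Real.exp (-(min cy cz * t)) + Cz * Real.exp (-(min cy cz * t)) :=
            add_le_add (mul_le_mul_of_nonneg_left h1 hCy) (mul_le_mul_of_nonneg_left h2 hCz)
        _ = (Cy + Cz) * Real.exp (-(min cy cz * t)) := by ring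
  set f : Module.End ℂ (Fin M → ℂ) := Matrix.toLinAlgEquiv' A with hfdef
  have htop : x ∈ ⨆ μ : ℂ, f.maxGenEigenspace μ := by
    rw [Module.End.iSup_maxGenEigenspace_eq_top f]; trivial
  refine Submodule.iSup_induction (motive := Q) _ htop ?_ hQ0 hQadd
  intro μ v hv
  by_cases hv0 : v = 0
  · rw [hv0]; exact hQ0
  obtain ⟨k, hk⟩ := (Module.End.mem_maxGenEigenspace f μ v).mp hv
  -- μ is in the spectrum of A
  have hμspec : μ ∈ spectrum ℂ A := by
    rw [← AlgEquiv.spectrum_eq (Matrix.toLinAlgEquiv' (R := ℂ) (n := Fin M)) A]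
    rw [← Module.End.hasEigenvalue_iff_mem_spectrum]
    refine Module.End.hasEigenvalue_of_hasGenEigenvalue (k := k) ?_
    have hvmem : v ∈ f.genEigenspace μ (k : ℕ∞) :=
      Module.End.mem_genEigenspace_nat.mpr (LinearMap.mem_ker.mpr hk)
    exact (Submodule.ne_bot_iff _).mpr ⟨v, hvmem, hv0⟩
  have hμre : μ.re < 0 := hA μ hμspec
  set Nm : Matrix (Fin M) (Fin M) ℂ := A - μ • 1 with hNm
  have hmv : ∀ (j : ℕ), (Nm ^ j) *ᵥ v = ((f - μ • 1) ^ j) v := by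
    intro j
    have h1 : Matrix.toLinAlgEquiv' (Nm ^ j) = (f - μ • 1) ^ j := by
      rw [map_pow, map_sub, _root_.map_smul, map_one]
    rw [← h1, Matrix.toLinAlgEquiv'_apply]
  have hNk : ∀ j : ℕ, k ≤ j → (Nm ^ j) *ᵥ v = 0 := by
    intro j hj
    have hk' : (Nm ^ k) *ᵥ v = 0 := by rw [hmv]; exact hk
    rw [← Nat.sub_add_cancel hj, pow_add, ← Matrix.mulVec_mulVec, hk', Matrix.mulVec_zero]
  have hsplit : ∀ t : ℝ, NormedSpace.exp ((t:ℂ) • A)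
      = Complex.exp ((t:ℂ) * μ) • NormedSpace.exp ((t:ℂ) • Nm) := by
    intro t
    have hAdd : (t:ℂ) • A = ((t:ℂ) * μ) • (1 : Matrix (Fin M) (Fin M) ℂ) + (t:ℂ) • Nm := by
      rw [hNm, smul_sub, smul_smul]
      abel
    have hcomm : Commute (((t:ℂ) * μ) • (1 : Matrix (Fin M) (Fin M) ℂ)) ((t:ℂ) • Nm) :=
      ((Commute.one_left _).smul_left _).smul_right _
    rw [hAdd, Matrix.exp_add_of_commute _ _ hcomm]
    have h1 : ((t:ℂ) * μ) • (1 : Matrix (Fin M) (Fin M) ℂ)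
        = algebraMap ℂ (Matrix (Fin M) (Fin M) ℂ) ((t:ℂ) * μ) :=
      (Algebra.algebraMap_eq_smul_one _).symm
    rw [h1]
    erw [← NormedSpace.algebraMap_exp_comm (𝕂 := ℂ) (𝔸 := Matrix (Fin M) (Fin M) ℂ)]
    rw [Algebra.algebraMap_eq_smul_one,
      smul_mul_assoc, one_mul, Complex.exp_eq_exp_ℂ]
  have formula : ∀ t : ℝ, NormedSpace.exp ((t:ℂ) • A) *ᵥ v
      = Complex.exp ((t:ℂ) * μ) •
          ∑ j ∈ Finset.range k, ((t:ℂ) ^ j * (j.factorial : ℂ)⁻¹) • ((Nm ^ j) *ᵥ v) := by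
    intro t
    rw [hsplit t, Matrix.smul_mulVec]
    congr 1
    rw [exp_mulVec]
    have hterm : ∀ j : ℕ, ((j.factorial : ℂ)⁻¹ • (((t:ℂ) • Nm) ^ j *ᵥ v))
        = ((t:ℂ) ^ j * (j.factorial : ℂ)⁻¹) • ((Nm ^ j) *ᵥ v) := by
      intro j
      rw [smul_pow, Matrix.smul_mulVec, smul_smul, mul_comm]
    rw [tsum_eq_sum (s := Finset.range k) (fun j hj => ?_)]
    · exact Finset.sum_congr rfl fun j _ => hterm j
    · have hjk : k ≤ j := le_of_not_gt (fun h => hj (Finset.mem_range.mpr h))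
      rw [hterm j, hNk j hjk, smul_zero]
  constructor
  · have heq : (fun t : ℝ => NormedSpace.exp ((t:ℂ) • A) *ᵥ v)
        = fun t : ℝ => Complex.exp ((t:ℂ) * μ) •
            ∑ j ∈ Finset.range k, ((t:ℂ) ^ j * (j.factorial : ℂ)⁻¹) • ((Nm ^ j) *ᵥ v) :=
      funext formula
    rw [heq]
    apply Continuous.fun_smul
    · exact Complex.continuous_exp.comp (Complex.continuous_ofReal.mul continuous_const)
    · apply continuous_finset_sum
      intro j _
      exact Continuous.smul ((Complex.continuous_ofReal.pow j).mul continuous_const)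
        continuous_const
  · set c : ℝ := -μ.re / 2 with hc
    have hcpos : 0 < c := by rw [hc]; linarith
    refine ⟨c, ∑ j ∈ Finset.range k,
      (j.factorial : ℝ)⁻¹ * ‖(Nm ^ j) *ᵥ v‖ * ((j.factorial : ℝ) / c ^ j),
      hcpos, Finset.sum_nonneg fun j _ => by positivity, fun t ht => ?_⟩
    rw [formula t, norm_smul]
    have habs : ‖Complex.exp ((t:ℂ) * μ)‖ = Real.exp (t * μ.re) := by
      rw [Complex.norm_exp]
      congr 1
      simp [Complex.mul_re]
    rw [habs]
    calc Real.exp (t * μ.re) * ‖∑ j ∈ Finset.range k,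
          ((t:ℂ) ^ j * (j.factorial : ℂ)⁻¹) • ((Nm ^ j) *ᵥ v)‖
        ≤ Real.exp (t * μ.re) * ∑ j ∈ Finset.range k,
            t ^ j * (j.factorial : ℝ)⁻¹ * ‖(Nm ^ j) *ᵥ v‖ := by
          apply mul_le_mul_of_nonneg_left _ (Real.exp_pos _).le
          refine le_trans (norm_sum_le _ _) (le_of_eq (Finset.sum_congr rfl fun j _ => ?_))
          rw [norm_smul, norm_mul, norm_pow, Complex.norm_real, Real.norm_eq_abs,
            abs_of_nonneg ht, norm_inv, Complex.norm_natCast]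
      _ = ∑ j ∈ Finset.range k, (t ^ j * Real.exp (t * μ.re)) *
            ((j.factorial : ℝ)⁻¹ * ‖(Nm ^ j) *ᵥ v‖) := by
          rw [Finset.mul_sum]
          exact Finset.sum_congr rfl fun j _ => by ring
      _ ≤ ∑ j ∈ Finset.range k, (((j.factorial : ℝ) / c ^ j) * Real.exp (-(c * t))) *
            ((j.factorial : ℝ)⁻¹ * ‖(Nm ^ j) *ᵥ v‖) := by
          apply Finset.sum_le_sum
          intro j _
          apply mul_le_mul_of_nonneg_right _ (by positivity)
          have h1 : t * μ.re = -(c * t) + -(c * t) := by rw [hc]; ring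
          have h2 : t ^ j * Real.exp (-(c * t)) ≤ (j.factorial : ℝ) / c ^ j :=
            pow_mul_exp_neg_le j hcpos ht
          rw [h1, Real.exp_add]
          calc t ^ j * (Real.exp (-(c * t)) * Real.exp (-(c * t)))
              = (t ^ j * Real.exp (-(c * t))) * Real.exp (-(c * t)) := by ring
            _ ≤ ((j.factorial : ℝ) / c ^ j) * Real.exp (-(c * t)) :=
                mul_le_mul_of_nonneg_right h2 (Real.exp_pos _).le
      _ = (∑ j ∈ Finset.range k,
            (j.factorial : ℝ)⁻¹ * ‖(Nm ^ j) *ᵥ v‖ * ((j.factorial : ℝ) / c ^ j)) *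
              Real.exp (-(c * t)) := by
          rw [Finset.sum_mul]
          exact Finset.sum_congr rfl fun j _ => by ring

/-- Decay and continuity of matrix exponential entries. -/
lemma exp_decay_entry (A : Matrix (Fin M) (Fin M) ℂ)
    (hA : ∀ μ ∈ spectrum ℂ A, μ.re < 0) (i j : Fin M) :
    Continuous (fun t : ℝ => NormedSpace.exp ((t:ℂ) • A) i j) ∧
      ∃ c C : ℝ, 0 < c ∧ 0 ≤ C ∧ ∀ t : ℝ, 0 ≤ t →
        ‖NormedSpace.exp ((t:ℂ) • A) i j‖ ≤ C * Real.exp (-(c * t)) := by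
  obtain ⟨hcont, c, C, hc, hC, hbd⟩ := exp_decay_vec A hA (Pi.single j 1)
  have hentry : ∀ t : ℝ, NormedSpace.exp ((t:ℂ) • A) i j
      = (NormedSpace.exp ((t:ℂ) • A) *ᵥ Pi.single j 1) i := by
    intro t
    rw [Matrix.mulVec_single]
    simp
  constructor
  · have : (fun t : ℝ => NormedSpace.exp ((t:ℂ) • A) i j)
        = fun t : ℝ => (NormedSpace.exp ((t:ℂ) • A) *ᵥ Pi.single j 1) i := funext hentry
    rw [this]
    exact (continuous_apply i).comp hcont
  · refine ⟨c, C, hc, hC, fun t ht => ?_⟩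
    rw [hentry t]
    exact le_trans (norm_le_pi_norm _ i) (hbd t ht)

noncomputable def matLagCoef (α τ : ℝ) (n : ℕ) {M : ℕ} (A : Matrix (Fin M) (Fin M) ℂ) :
    Matrix (Fin M) (Fin M) ℂ :=
  Matrix.of fun i j =>
    ∫ t in Set.Ioi (0 : ℝ), (NormedSpace.exp ((t : ℂ) • A)) i j * (lagFun α τ n t : ℂ)

noncomputable def frobSq {M : ℕ} (C : Matrix (Fin M) (Fin M) ℂ) : ℝ :=
  ∑ i, ∑ j, ‖C i j‖ ^ 2

lemma sum_mulVec {ι : Type*} (s : Finset ι) (B : ι → Matrix (Fin M) (Fin M) ℂ)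
    (u : Fin M → ℂ) : (∑ n ∈ s, B n) *ᵥ u = ∑ n ∈ s, (B n *ᵥ u) := by
  classical
  induction s using Finset.cons_induction with
  | empty => simp [Matrix.zero_mulVec]
  | cons a s ha ih => rw [Finset.sum_cons, Finset.sum_cons, Matrix.add_mulVec, ih]

/-- Existence of a normalized eigenvector. -/
lemma exists_unit_eigenvector (A : Matrix (Fin M) (Fin M) ℂ) {lam : ℂ}
    (hlam : lam ∈ spectrum ℂ A) :
    ∃ u : Fin M → ℂ, A *ᵥ u = lam • u ∧ ∑ i, ‖u i‖ ^ 2 = 1 := by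
  have h1 : lam ∈ spectrum ℂ (Matrix.toLinAlgEquiv' (R := ℂ) A) := by
    rw [AlgEquiv.spectrum_eq]; exact hlam
  have h2 : Module.End.HasEigenvalue (Matrix.toLinAlgEquiv' (R := ℂ) A) lam :=
    Module.End.hasEigenvalue_iff_mem_spectrum.mpr h1
  obtain ⟨v, hv⟩ := h2.exists_hasEigenvector
  have hAv : A *ᵥ v = lam • v := by
    have := Module.End.mem_eigenspace_iff.mp hv.1
    rwa [Matrix.toLinAlgEquiv'_apply] at this
  have hvpos : 0 < ∑ i, ‖v i‖ ^ 2 := by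
    have hex : ∃ i, v i ≠ 0 := by
      by_contra h; push_neg at h; exact hv.2 (funext h)
    obtain ⟨i, hi⟩ := hex
    have h3 : 0 < ‖v i‖ ^ 2 := pow_pos (norm_pos_iff.mpr hi) 2
    exact lt_of_lt_of_le h3 (Finset.single_le_sum (f := fun i => ‖v i‖ ^ 2)
      (fun _ _ => by positivity) (Finset.mem_univ i))
  set s : ℝ := Real.sqrt (∑ i, ‖v i‖ ^ 2) with hs
  have hspos : 0 < s := Real.sqrt_pos.mpr hvpos
  refine ⟨((s : ℂ))⁻¹ • v, ?_, ?_⟩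
  · rw [Matrix.mulVec_smul, hAv, smul_comm]
  · have hterm : ∀ i : Fin M, ‖(((s : ℂ))⁻¹ • v) i‖ ^ 2 = (s⁻¹) ^ 2 * ‖v i‖ ^ 2 := by
      intro i
      rw [Pi.smul_apply, norm_smul, norm_inv, Complex.norm_real, Real.norm_eq_abs,
        abs_of_pos hspos, mul_pow]
    rw [Finset.sum_congr rfl (fun i _ => hterm i), ← Finset.mul_sum]
    have hsq : s ^ 2 = ∑ i, ‖v i‖ ^ 2 := Real.sq_sqrt hvpos.le
    rw [inv_pow, hsq, inv_mul_cancel₀ (ne_of_gt hvpos)]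

lemma lagFun_sq_le (α τ : ℝ) (hτ : 0 < τ) (n : ℕ) :
    ∃ C : ℝ, 0 ≤ C ∧ ∀ t : ℝ, 0 < t →
      (lagFun α τ n t) ^ 2 ≤ C * (t ^ α * Real.exp (-(τ/2 * t))) := by
  obtain ⟨Cl, hCl0, hCl⟩ := lagFun_le α τ hτ n
  refine ⟨Cl ^ 2, by positivity, fun t ht => ?_⟩
  have h1 : (lagFun α τ n t) ^ 2 ≤ (Cl * (t ^ (α/2) * Real.exp (-(τ/4 * t)))) ^ 2 := by
    rw [← sq_abs (lagFun α τ n t)]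
    apply pow_le_pow_left₀ (abs_nonneg _) (hCl t ht)
  have h2 : (t ^ (α/2 : ℝ)) ^ 2 = t ^ α := by
    rw [← Real.rpow_natCast (t ^ (α/2 : ℝ)) 2, ← Real.rpow_mul ht.le]
    norm_num
  have h3 : (Real.exp (-(τ/4 * t))) ^ 2 = Real.exp (-(τ/2 * t)) := by
    rw [← Real.exp_nat_mul]
    congr 1; ring
  calc (lagFun α τ n t) ^ 2 ≤ (Cl * (t ^ (α/2) * Real.exp (-(τ/4 * t)))) ^ 2 := h1
    _ = Cl ^ 2 * ((t ^ (α/2 : ℝ)) ^ 2 * (Real.exp (-(τ/4 * t))) ^ 2) := by ring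
    _ = Cl ^ 2 * (t ^ α * Real.exp (-(τ/2 * t))) := by rw [h2, h3]

lemma integrableOn_entry_mul_lagFun (α τ : ℝ) (hτ : 0 < τ) (hα : -1 < α)
    (A : Matrix (Fin M) (Fin M) ℂ) (hA : ∀ μ ∈ spectrum ℂ A, μ.re < 0) (n : ℕ) (i j : Fin M) :
    IntegrableOn (fun t : ℝ =>
      NormedSpace.exp ((t:ℂ) • A) i j * (lagFun α τ n t : ℂ)) (Ioi 0) := by
  obtain ⟨hcont, c, C, hc, hC, hbd⟩ := exp_decay_entry A hA i j
  obtain ⟨Cl, hCl0, hCl⟩ := lagFun_le α τ hτ n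
  have hmeas : AEStronglyMeasurable (fun t : ℝ =>
      NormedSpace.exp ((t:ℂ) • A) i j * (lagFun α τ n t : ℂ))
      (volume.restrict (Ioi 0)) := by
    apply ContinuousOn.aestronglyMeasurable _ measurableSet_Ioi
    exact hcont.continuousOn.mul
      (Complex.continuous_ofReal.comp_continuousOn (lagFun_continuousOn α τ n))
  have hint : IntegrableOn
      (fun t : ℝ => (C * Cl) * (t ^ (α/2) * Real.exp (-(τ/4 * t)))) (Ioi 0) :=
    (integrableOn_rpow_mul_exp (by linarith) (by linarith)).const_mul _
  refine hint.integrable.mono' hmeas ?_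
  filter_upwards [ae_restrict_mem measurableSet_Ioi] with t ht
  have ht0 : (0:ℝ) < t := ht
  have he1 : Real.exp (-(c * t)) ≤ 1 := by
    rw [Real.exp_le_one_iff]
    nlinarith
  have henv : (0:ℝ) ≤ t ^ (α/2) * Real.exp (-(τ/4 * t)) := by positivity
  rw [norm_mul, Complex.norm_real, Real.norm_eq_abs]
  calc ‖NormedSpace.exp ((t:ℂ) • A) i j‖ * |lagFun α τ n t|
      ≤ (C * Real.exp (-(c * t))) * (Cl * (t ^ (α/2) * Real.exp (-(τ/4 * t)))) := by
        apply mul_le_mul (hbd t ht0.le) (hCl t ht0) (abs_nonneg _) (by positivity)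
    _ ≤ (C * 1) * (Cl * (t ^ (α/2) * Real.exp (-(τ/4 * t)))) := by
        apply mul_le_mul_of_nonneg_right _ (by positivity)
        exact mul_le_mul_of_nonneg_left he1 hC
    _ = (C * Cl) * (t ^ (α/2) * Real.exp (-(τ/4 * t))) := by ring

lemma matLagCoef_mulVec (α τ : ℝ) (hτ : 0 < τ) (hα : -1 < α)
    (A : Matrix (Fin M) (Fin M) ℂ) (hA : ∀ μ ∈ spectrum ℂ A, μ.re < 0) {lam : ℂ}
    {u : Fin M → ℂ} (hu : A *ᵥ u = lam • u) (n : ℕ) :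
    (matLagCoef α τ n A) *ᵥ u = lagCoef α τ n lam • u := by
  funext i
  have hexpu : ∀ t : ℝ, NormedSpace.exp ((t:ℂ) • A) *ᵥ u
      = Complex.exp ((t:ℂ) * lam) • u := fun t => exp_mulVec_eigen A hu t
  have step1 : ((matLagCoef α τ n A) *ᵥ u) i
      = ∑ j, (∫ t in Ioi (0:ℝ),
          NormedSpace.exp ((t:ℂ) • A) i j * (lagFun α τ n t : ℂ)) * u j := by
    simp [matLagCoef, Matrix.mulVec, dotProduct]
  rw [step1]
  have step2 : ∀ j, (∫ t in Ioi (0:ℝ),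
      NormedSpace.exp ((t:ℂ) • A) i j * (lagFun α τ n t : ℂ)) * u j
      = ∫ t in Ioi (0:ℝ),
          NormedSpace.exp ((t:ℂ) • A) i j * (lagFun α τ n t : ℂ) * u j := by
    intro j
    rw [MeasureTheory.integral_mul_const]
  rw [Finset.sum_congr rfl fun j _ => step2 j]
  rw [← MeasureTheory.integral_finset_sum _ (fun j _ =>
    (integrableOn_entry_mul_lagFun α τ hτ hα A hA n i j).integrable.mul_const (u j))]
  have step3 : ∀ t : ℝ, (∑ j, NormedSpace.exp ((t:ℂ) • A) i j *
      (lagFun α τ n t : ℂ) * u j)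
      = (Complex.exp (lam * (t:ℂ)) * (lagFun α τ n t : ℂ)) * u i := by
    intro t
    have h1 : (∑ j, NormedSpace.exp ((t:ℂ) • A) i j * (lagFun α τ n t : ℂ) * u j)
        = (∑ j, NormedSpace.exp ((t:ℂ) • A) i j * u j) * (lagFun α τ n t : ℂ) := by
      rw [Finset.sum_mul]
      exact Finset.sum_congr rfl fun j _ => by ring
    have h2 : (∑ j, NormedSpace.exp ((t:ℂ) • A) i j * u j)
        = (NormedSpace.exp ((t:ℂ) • A) *ᵥ u) i := by
      simp [Matrix.mulVec, dotProduct]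
    rw [h1, h2, hexpu t]
    simp [Pi.smul_apply, smul_eq_mul]
    ring
  rw [MeasureTheory.integral_congr_ae (Filter.Eventually.of_forall fun t => step3 t)]
  have step4 : (∫ t in Ioi (0:ℝ),
      (Complex.exp (lam * (t:ℂ)) * (lagFun α τ n t : ℂ)) * u i)
      = (∫ t in Ioi (0:ℝ), Complex.exp (lam * (t:ℂ)) * (lagFun α τ n t : ℂ)) * u i := by
    rw [MeasureTheory.integral_mul_const]
  rw [step4]
  simp [lagCoef, Pi.smul_apply, smul_eq_mul]

noncomputable def lagZeta (N : ℕ) (τ α : ℝ) (z : ℂ) : ℝ :=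
  ∫ t in Set.Ioi (0 : ℝ),
    ‖Complex.exp (z * t) -
        ∑ n ∈ Finset.range (N + 1), lagCoef α τ n z * (lagFun α τ n t : ℂ)‖ ^ 2

theorem lagZeta_le_truncation_error (M : ℕ) (A : Matrix (Fin M) (Fin M) ℂ)
    (hA : ∀ μ ∈ spectrum ℂ A, μ.re < 0) (lam : ℂ) (hlam : lam ∈ spectrum ℂ A)
    (τ α : ℝ) (hτ : 0 < τ) (hα : -1 < α) (N : ℕ) :
    lagZeta N τ α lam ≤
      ∫ t in Set.Ioi (0 : ℝ),
        frobSq (NormedSpace.exp ((t : ℂ) • A) -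
          ∑ n ∈ Finset.range (N + 1), (lagFun α τ n t : ℂ) • matLagCoef α τ n A) := by
  classical
  obtain ⟨u, hu, hunorm⟩ := exists_unit_eigenvector A hlam
  let D : ℝ → Matrix (Fin M) (Fin M) ℂ := fun t =>
    NormedSpace.exp ((t : ℂ) • A) -
      ∑ n ∈ Finset.range (N + 1), (lagFun α τ n t : ℂ) • matLagCoef α τ n A
  let z : ℝ → ℂ := fun t => Complex.exp (lam * t) -
    ∑ n ∈ Finset.range (N + 1), lagCoef α τ n lam * (lagFun α τ n t : ℂ)
  have hDu : ∀ t : ℝ, D t *ᵥ u = z t • u := by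
    intro t
    show (NormedSpace.exp ((t : ℂ) • A) -
      ∑ n ∈ Finset.range (N + 1), (lagFun α τ n t : ℂ) • matLagCoef α τ n A) *ᵥ u = _
    rw [Matrix.sub_mulVec, sum_mulVec]
    have h1 : ∀ n, ((lagFun α τ n t : ℂ) • matLagCoef α τ n A) *ᵥ u
        = (lagCoef α τ n lam * (lagFun α τ n t : ℂ)) • u := by
      intro n
      rw [Matrix.smul_mulVec, matLagCoef_mulVec α τ hτ hα A hA hu n, smul_smul,
        mul_comm]
    rw [Finset.sum_congr rfl fun n _ => h1 n]
    have h2 : NormedSpace.exp ((t : ℂ) • A) *ᵥ u = Complex.exp (lam * t) • u := by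
      rw [exp_mulVec_eigen A hu t, mul_comm]
    rw [h2]
    show _ = (Complex.exp (lam * t) -
      ∑ n ∈ Finset.range (N + 1), lagCoef α τ n lam * (lagFun α τ n t : ℂ)) • u
    rw [sub_smul, Finset.sum_smul]
  have hpt : ∀ t : ℝ, ‖z t‖ ^ 2 ≤ frobSq (D t) := by
    intro t
    have h0 : ‖z t‖ ^ 2 = ∑ i, ‖(D t *ᵥ u) i‖ ^ 2 := by
      rw [hDu t]
      have hterm : ∀ i : Fin M, ‖(z t • u) i‖ ^ 2 = ‖z t‖ ^ 2 * ‖u i‖ ^ 2 := by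
        intro i; rw [Pi.smul_apply, norm_smul, mul_pow]
      rw [Finset.sum_congr rfl fun i _ => hterm i, ← Finset.mul_sum, hunorm, mul_one]
    rw [h0, frobSq]
    apply Finset.sum_le_sum
    intro i _
    have h1 : ‖(D t *ᵥ u) i‖ ≤ ∑ j, ‖D t i j‖ * ‖u j‖ := by
      have hexp : (D t *ᵥ u) i = ∑ j, D t i j * u j := by
        simp [Matrix.mulVec, dotProduct]
      rw [hexp]
      exact le_trans (norm_sum_le _ _)
        (le_of_eq (Finset.sum_congr rfl fun j _ => norm_mul _ _))
    calc ‖(D t *ᵥ u) i‖ ^ 2 ≤ (∑ j, ‖D t i j‖ * ‖u j‖) ^ 2 :=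
          pow_le_pow_left₀ (norm_nonneg _) h1 2
      _ ≤ (∑ j, ‖D t i j‖ ^ 2) * (∑ j, ‖u j‖ ^ 2) :=
          Finset.sum_mul_sq_le_sq_mul_sq _ _ _
      _ = ∑ j, ‖D t i j‖ ^ 2 := by rw [hunorm, mul_one]
  -- Integrability of the right-hand side
  choose Cl hCl0 hCl using fun n => lagFun_sq_le α τ hτ n
  have hDij : ∀ i j : Fin M,
      Integrable (fun t : ℝ => ‖D t i j‖ ^ 2) (volume.restrict (Ioi 0)) := by
    intro i j
    obtain ⟨hcont, c, C, hc, hC, hbd⟩ := exp_decay_entry A hA i j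
    have hentry : ∀ t : ℝ, D t i j = NormedSpace.exp ((t : ℂ) • A) i j -
        ∑ n ∈ Finset.range (N + 1), (lagFun α τ n t : ℂ) * matLagCoef α τ n A i j := by
      intro t
      show (NormedSpace.exp ((t : ℂ) • A) -
        ∑ n ∈ Finset.range (N + 1), (lagFun α τ n t : ℂ) • matLagCoef α τ n A) i j = _
      simp [Matrix.sub_apply, Matrix.sum_apply, Matrix.smul_apply, smul_eq_mul]
    have hmeas : AEStronglyMeasurable (fun t : ℝ => ‖D t i j‖ ^ 2)
        (volume.restrict (Ioi 0)) := by
      have hDcont : ContinuousOn (fun t : ℝ => D t i j) (Ioi 0) := by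
        have : (fun t : ℝ => D t i j) = fun t : ℝ =>
            NormedSpace.exp ((t : ℂ) • A) i j -
              ∑ n ∈ Finset.range (N + 1),
                (lagFun α τ n t : ℂ) * matLagCoef α τ n A i j := funext hentry
        rw [this]
        apply ContinuousOn.sub hcont.continuousOn
        apply continuousOn_finset_sum
        intro n _
        exact (Complex.continuous_ofReal.comp_continuousOn
          (lagFun_continuousOn α τ n)).mul continuousOn_const
      exact ((hDcont.norm).pow 2).aestronglyMeasurable measurableSet_Ioi
    set g : ℝ → ℝ := fun t => 2 * C ^ 2 * Real.exp (-(2 * c * t)) +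
      2 * ((N : ℝ) + 1) * ∑ n ∈ Finset.range (N + 1),
        ‖matLagCoef α τ n A i j‖ ^ 2 * (Cl n * (t ^ α * Real.exp (-(τ / 2 * t)))) with hg
    have hgint : IntegrableOn g (Ioi 0) := by
      apply Integrable.add
      · have := (exp_neg_integrableOn_Ioi 0 (by linarith : (0:ℝ) < 2 * c))
        have h2 : IntegrableOn (fun t : ℝ => Real.exp (-(2 * c * t))) (Ioi 0) := by
          refine this.congr_fun (fun t _ => by ring_nf) measurableSet_Ioi
        exact h2.integrable.const_mul _
      · apply Integrable.const_mul
        apply integrable_finset_sum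
        intro n _
        exact (((integrableOn_rpow_mul_exp hα (by linarith : (0:ℝ) < τ / 2)).const_mul
          (Cl n)).const_mul _)
    refine hgint.integrable.mono' hmeas ?_
    filter_upwards [ae_restrict_mem measurableSet_Ioi] with t ht
    have ht0 : (0:ℝ) < t := ht
    have ha : ‖NormedSpace.exp ((t : ℂ) • A) i j‖ ≤ C * Real.exp (-(c * t)) :=
      hbd t ht0.le
    have hb : ‖∑ n ∈ Finset.range (N + 1),
        (lagFun α τ n t : ℂ) * matLagCoef α τ n A i j‖
        ≤ ∑ n ∈ Finset.range (N + 1), |lagFun α τ n t| * ‖matLagCoef α τ n A i j‖ := by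
      refine le_trans (norm_sum_le _ _) (le_of_eq (Finset.sum_congr rfl fun n _ => ?_))
      rw [norm_mul, Complex.norm_real, Real.norm_eq_abs]
    have hbsq : (∑ n ∈ Finset.range (N + 1),
        |lagFun α τ n t| * ‖matLagCoef α τ n A i j‖) ^ 2
        ≤ ((N : ℝ) + 1) * ∑ n ∈ Finset.range (N + 1),
            (|lagFun α τ n t| * ‖matLagCoef α τ n A i j‖) ^ 2 := by
      have := sq_sum_le_card_mul_sum_sq
        (s := Finset.range (N + 1))
        (f := fun n => |lagFun α τ n t| * ‖matLagCoef α τ n A i j‖)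
      simpa [Finset.card_range, Nat.cast_add, Nat.cast_one] using this
    have hsum : ∑ n ∈ Finset.range (N + 1),
        (|lagFun α τ n t| * ‖matLagCoef α τ n A i j‖) ^ 2
        ≤ ∑ n ∈ Finset.range (N + 1),
            ‖matLagCoef α τ n A i j‖ ^ 2 * (Cl n * (t ^ α * Real.exp (-(τ / 2 * t)))) := by
      apply Finset.sum_le_sum
      intro n _
      have h5 : (|lagFun α τ n t|) ^ 2 ≤ Cl n * (t ^ α * Real.exp (-(τ / 2 * t))) := by
        rw [sq_abs]; exact hCl n t ht0
      calc (|lagFun α τ n t| * ‖matLagCoef α τ n A i j‖) ^ 2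
          = ‖matLagCoef α τ n A i j‖ ^ 2 * (|lagFun α τ n t|) ^ 2 := by ring
        _ ≤ ‖matLagCoef α τ n A i j‖ ^ 2 * (Cl n * (t ^ α * Real.exp (-(τ / 2 * t)))) :=
            mul_le_mul_of_nonneg_left h5 (by positivity)
    have hasq : ‖NormedSpace.exp ((t : ℂ) • A) i j‖ ^ 2
        ≤ C ^ 2 * Real.exp (-(2 * c * t)) := by
      have h6 : (C * Real.exp (-(c * t))) ^ 2 = C ^ 2 * Real.exp (-(2 * c * t)) := by
        rw [mul_pow, pow_two (Real.exp (-(c * t))), ← Real.exp_add]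
        ring_nf
      calc ‖NormedSpace.exp ((t : ℂ) • A) i j‖ ^ 2 ≤ (C * Real.exp (-(c * t))) ^ 2 :=
            pow_le_pow_left₀ (norm_nonneg _) ha 2
        _ = C ^ 2 * Real.exp (-(2 * c * t)) := h6
    rw [Real.norm_eq_abs, abs_of_nonneg (by positivity : (0:ℝ) ≤ ‖D t i j‖ ^ 2)]
    rw [hentry t]
    set a := ‖NormedSpace.exp ((t : ℂ) • A) i j‖
    set b := ‖∑ n ∈ Finset.range (N + 1),
        (lagFun α τ n t : ℂ) * matLagCoef α τ n A i j‖
    have htri : ‖NormedSpace.exp ((t : ℂ) • A) i j -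
        ∑ n ∈ Finset.range (N + 1),
          (lagFun α τ n t : ℂ) * matLagCoef α τ n A i j‖ ≤ a + b := norm_sub_le _ _
    have hsquare : ‖NormedSpace.exp ((t : ℂ) • A) i j -
        ∑ n ∈ Finset.range (N + 1),
          (lagFun α τ n t : ℂ) * matLagCoef α τ n A i j‖ ^ 2 ≤ 2 * a ^ 2 + 2 * b ^ 2 := by
      have h7 : ‖NormedSpace.exp ((t : ℂ) • A) i j -
          ∑ n ∈ Finset.range (N + 1),
            (lagFun α τ n t : ℂ) * matLagCoef α τ n A i j‖ ^ 2 ≤ (a + b) ^ 2 :=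
        pow_le_pow_left₀ (norm_nonneg _) htri 2
      nlinarith [sq_nonneg (a - b)]
    have hbb : b ^ 2 ≤ ((N : ℝ) + 1) * ∑ n ∈ Finset.range (N + 1),
        ‖matLagCoef α τ n A i j‖ ^ 2 * (Cl n * (t ^ α * Real.exp (-(τ / 2 * t)))) := by
      have hb2 : b ^ 2 ≤ (∑ n ∈ Finset.range (N + 1),
          |lagFun α τ n t| * ‖matLagCoef α τ n A i j‖) ^ 2 :=
        pow_le_pow_left₀ (norm_nonneg _) hb 2
      refine le_trans (le_trans hb2 hbsq) ?_
      exact mul_le_mul_of_nonneg_left hsum (by positivity)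
    rw [hg]
    calc ‖NormedSpace.exp ((t : ℂ) • A) i j -
        ∑ n ∈ Finset.range (N + 1),
          (lagFun α τ n t : ℂ) * matLagCoef α τ n A i j‖ ^ 2
        ≤ 2 * a ^ 2 + 2 * b ^ 2 := hsquare
      _ ≤ 2 * (C ^ 2 * Real.exp (-(2 * c * t))) + 2 * (((N : ℝ) + 1) *
            ∑ n ∈ Finset.range (N + 1),
              ‖matLagCoef α τ n A i j‖ ^ 2 *
                (Cl n * (t ^ α * Real.exp (-(τ / 2 * t))))) := by
          have := add_le_add (mul_le_mul_of_nonneg_left hasq (by norm_num : (0:ℝ) ≤ 2))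
            (mul_le_mul_of_nonneg_left hbb (by norm_num : (0:ℝ) ≤ 2))
          exact this
      _ = 2 * C ^ 2 * Real.exp (-(2 * c * t)) + 2 * ((N : ℝ) + 1) *
            ∑ n ∈ Finset.range (N + 1),
              ‖matLagCoef α τ n A i j‖ ^ 2 *
                (Cl n * (t ^ α * Real.exp (-(τ / 2 * t)))) := by ring
  have hGint : IntegrableOn (fun t : ℝ => frobSq (D t)) (Ioi 0) := by
    have : (fun t : ℝ => frobSq (D t)) = fun t : ℝ => ∑ i, ∑ j, ‖D t i j‖ ^ 2 := rfl
    rw [this]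
    apply integrable_finset_sum
    intro i _
    exact integrable_finset_sum _ fun j _ => hDij i j
  show lagZeta N τ α lam ≤ ∫ t in Set.Ioi (0 : ℝ), frobSq (D t)
  have hzeta : lagZeta N τ α lam = ∫ t in Set.Ioi (0 : ℝ), ‖z t‖ ^ 2 := rfl
  rw [hzeta]
  apply integral_mono_of_nonneg
  · exact Filter.Eventually.of_forall fun t => by positivity
  · exact hGint
  · exact Filter.Eventually.of_forall fun t => hpt t

end MatrixPart
end

section
/- Let A be an M×M complex matrix that is diagonalizable: A = T·D·T⁻¹ with T invertible and D diagonal with diagonal entries λ_1,…,λ_M satisfying Re λ_k < 0 for all k. Let τ > 0, α > −1, N ∈ ℕ. Then ‖H_A − H_{N,τ,α,A}‖_{L²[0,∞)} ≤ κ(T) · √(Σ_{k=1}^M ζ(N,τ,α,λ_k)) ≤ κ(T) · √(M · max_k ζ(N,τ,α,λ_k)), where κ(T) = ‖T‖_{2→2} · ‖T⁻¹‖_{2→2} is the condition number of T with respect to the operator norm induced by the Euclidean norm on ℂ^M. -/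
open MeasureTheory

/-- The operator norm of a complex matrix induced by the Euclidean norm on `ℂ^M`. -/
noncomputable def l2OpNorm {M : ℕ} (C : Matrix (Fin M) (Fin M) ℂ) : ℝ :=
  ‖(Matrix.toEuclideanCLM (𝕜 := ℂ) C : EuclideanSpace ℂ (Fin M) →L[ℂ] EuclideanSpace ℂ (Fin M))‖

/-! ### Auxiliary material -/

section Aux

open Set Matrix

set_option synthInstance.maxHeartbeats 1000000
set_option maxHeartbeats 1000000

/-- Basic building block `t^q e^{-ct} t^k`. -/
noncomputable def bb (q c : ℝ) (k : ℕ) (t : ℝ) : ℝ := t ^ q * Real.exp (-(c * t)) * t ^ k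

lemma I1 {p c : ℝ} (hp : -1 < p) (hc : 0 < c) :
    IntegrableOn (fun t : ℝ => t ^ p * Real.exp (-(c * t))) (Set.Ioi 0) := by
  have h := Real.GammaIntegral_convergent (s := p + 1) (by linarith)
  have h2 : IntegrableOn (fun x : ℝ => Real.exp (-(c*x)) * (c*x) ^ (p + 1 - 1)) (Ioi 0) := by
    have := (integrableOn_Ioi_comp_mul_left_iff
      (fun x => Real.exp (-x) * x ^ (p + 1 - 1)) 0 hc).2 (by simpa using h)
    simpa using this
  have h3 : IntegrableOn (fun x : ℝ => c ^ p * (x ^ p * Real.exp (-(c*x)))) (Ioi 0) := by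
    apply h2.congr_fun _ measurableSet_Ioi
    intro x hx
    simp only [add_sub_cancel_right, Real.mul_rpow hc.le (le_of_lt hx)]
    ring
  have h4 : IntegrableOn (fun x : ℝ => (c ^ p)⁻¹ * (c ^ p * (x ^ p * Real.exp (-(c*x))))) (Ioi 0) :=
    (h3 : Integrable _ _).const_mul _
  apply h4.congr_fun _ measurableSet_Ioi
  intro x hx
  simp only [← mul_assoc, inv_mul_cancel₀ (ne_of_gt (Real.rpow_pos_of_pos hc p)), one_mul]

lemma contOn_bb (q c : ℝ) (k : ℕ) : ContinuousOn (bb q c k) (Ioi 0) := by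
  apply ContinuousOn.mul
  apply ContinuousOn.mul
  · exact ContinuousOn.rpow_const continuousOn_id (fun x hx => Or.inl (ne_of_gt hx))
  · exact (Real.continuous_exp.comp (continuous_const.mul continuous_id).neg).continuousOn
  · exact (continuous_pow k).continuousOn

lemma bb_nonneg {q c : ℝ} {k : ℕ} {t : ℝ} (ht : 0 < t) : 0 ≤ bb q c k t := by
  unfold bb
  have h := Real.rpow_nonneg ht.le q
  positivity

lemma bb_eq {q c : ℝ} {k : ℕ} {t : ℝ} (ht : 0 < t) :
    bb q c k t = t ^ (q + k) * Real.exp (-(c * t)) := by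
  unfold bb
  rw [Real.rpow_add ht, Real.rpow_natCast]
  ring

lemma integrable_exp_mul_bb {q c : ℝ} (hq : -1 < q) (hc : 0 < c) {z : ℂ} (hz : z.re ≤ 0) (k : ℕ) :
    IntegrableOn (fun t : ℝ => Complex.exp (z * t) * (bb q c k t : ℂ)) (Ioi 0) := by
  have hI : IntegrableOn (fun t : ℝ => t ^ (q + k) * Real.exp (-(c * t))) (Ioi 0) :=
    I1 (by have : (0:ℝ) ≤ k := Nat.cast_nonneg k; linarith) hc
  apply Integrable.mono' hI
  · apply AEStronglyMeasurable.mul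
    · exact (Complex.continuous_exp.comp
        (continuous_const.mul Complex.continuous_ofReal)).aestronglyMeasurable
    · exact (Complex.continuous_ofReal.comp_continuousOn
        (contOn_bb q c k)).aestronglyMeasurable measurableSet_Ioi
  · filter_upwards [ae_restrict_mem measurableSet_Ioi] with t ht
    have ht' : (0:ℝ) < t := ht
    rw [norm_mul, Complex.norm_exp, Complex.norm_real, Real.norm_eq_abs]
    have h1 : (z * t).re = z.re * t := by simp [Complex.mul_re]
    rw [h1, abs_of_nonneg (bb_nonneg ht'), bb_eq ht']
    have h2 : Real.exp (z.re * t) ≤ 1 := by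
      rw [Real.exp_le_one_iff]
      exact mul_nonpos_of_nonpos_of_nonneg hz ht'.le
    nlinarith [Real.rpow_nonneg ht'.le (q + k), Real.exp_pos (-(c * t)),
      mul_nonneg (Real.rpow_nonneg ht'.le (q+k)) (Real.exp_pos (-(c*t))).le]

lemma memℒp_bb {q c : ℝ} (hq : -1 < 2 * q) (hc : 0 < c) (k : ℕ) :
    MemLp (fun t : ℝ => (bb q c k t : ℂ)) 2 (volume.restrict (Ioi 0)) := by
  have hsm : AEStronglyMeasurable (fun t : ℝ => (bb q c k t : ℂ)) (volume.restrict (Ioi 0)) :=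
    (Complex.continuous_ofReal.comp_continuousOn
      (contOn_bb q c k)).aestronglyMeasurable measurableSet_Ioi
  rw [memLp_two_iff_integrable_sq_norm hsm]
  have hI : IntegrableOn (fun t : ℝ => t ^ (2*q + (2*k : ℕ)) * Real.exp (-(2*c * t))) (Ioi 0) :=
    I1 (by have : (0:ℝ) ≤ (2*k : ℕ) := Nat.cast_nonneg _; linarith) (by linarith)
  apply Integrable.mono' hI
  · exact (hsm.norm.pow 2)
  · filter_upwards [ae_restrict_mem measurableSet_Ioi] with t ht
    have ht' : (0:ℝ) < t := ht
    rw [Real.norm_eq_abs, abs_of_nonneg (by positivity), Complex.norm_real, Real.norm_eq_abs,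
      abs_of_nonneg (bb_nonneg ht')]
    apply le_of_eq
    rw [bb_eq ht', mul_pow, ← Real.rpow_natCast _ 2, ← Real.rpow_mul ht'.le, ← Real.exp_nat_mul]
    norm_num
    rw [show ((q + k) * 2 : ℝ) = 2*q + (2*k:ℕ) by push_cast; ring]
    push_cast
    ring_nf

/-- The coefficients in the expansion of `lagFun` into basic building blocks. -/
noncomputable def lagC (α τ : ℝ) (n k : ℕ) : ℝ :=
  Real.sqrt (n.factorial / Real.Gamma (n + α + 1)) * τ ^ ((α + 1) / 2) *
    ((-1 : ℝ) ^ k * (Real.Gamma (n + α + 1) / (Real.Gamma (k + α + 1) * (n - k).factorial)) /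
      k.factorial) * τ ^ k

lemma lagFun_eq (α τ : ℝ) (n : ℕ) (t : ℝ) :
    lagFun α τ n t = ∑ k ∈ Finset.range (n + 1), lagC α τ n k * bb (α / 2) (τ / 2) k t := by
  unfold lagFun lagPoly lagC bb
  rw [Finset.mul_sum]
  apply Finset.sum_congr rfl
  intro k _
  rw [mul_pow]
  rw [show Real.exp (-τ * t / 2) = Real.exp (-(τ/2 * t)) by ring_nf]
  ring

variable {α τ : ℝ}

lemma integrable_exp_mul_lagFun (hτ : 0 < τ) (hα : -1 < α) {z : ℂ} (hz : z.re ≤ 0) (n : ℕ) :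
    IntegrableOn (fun t : ℝ => Complex.exp (z * t) * (lagFun α τ n t : ℂ)) (Ioi 0) := by
  have h : ∀ t : ℝ, Complex.exp (z * t) * (lagFun α τ n t : ℂ) =
      ∑ k ∈ Finset.range (n + 1),
        (lagC α τ n k : ℂ) * (Complex.exp (z * t) * (bb (α/2) (τ/2) k t : ℂ)) := by
    intro t
    rw [lagFun_eq]
    push_cast
    rw [Finset.mul_sum]
    exact Finset.sum_congr rfl fun k _ => by ring
  simp_rw [h]
  exact integrable_finset_sum _ fun k _ =>
    (integrable_exp_mul_bb (by linarith) (by linarith) hz k).const_mul _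

lemma memℒp_lagFun (hτ : 0 < τ) (hα : -1 < α) (n : ℕ) :
    MemLp (fun t : ℝ => (lagFun α τ n t : ℂ)) 2 (volume.restrict (Ioi 0)) := by
  have h : (fun t : ℝ => (lagFun α τ n t : ℂ)) =
      fun t => ∑ k ∈ Finset.range (n + 1), (lagC α τ n k : ℂ) * (bb (α/2) (τ/2) k t : ℂ) := by
    funext t
    rw [lagFun_eq]
    push_cast
    rfl
  rw [h]
  exact memLp_finset_sum _ fun k _ => (memℒp_bb (by linarith) (by linarith) k).const_mul _

lemma memℒp_exp {z : ℂ} (hz : z.re < 0) :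
    MemLp (fun t : ℝ => Complex.exp (z * t)) 2 (volume.restrict (Ioi 0)) := by
  have hsm : AEStronglyMeasurable (fun t : ℝ => Complex.exp (z * t))
      (volume.restrict (Ioi 0)) :=
    (Complex.continuous_exp.comp
      (continuous_const.mul Complex.continuous_ofReal)).aestronglyMeasurable
  rw [memLp_two_iff_integrable_sq_norm hsm]
  have hI : IntegrableOn (fun t : ℝ => Real.exp (-(2 * -z.re) * t)) (Ioi 0) :=
    exp_neg_integrableOn_Ioi 0 (by linarith)
  apply Integrable.mono' hI ((hsm.norm.pow 2).congr (Filter.Eventually.of_forall fun t => by simp))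
  filter_upwards [ae_restrict_mem measurableSet_Ioi] with t ht
  apply le_of_eq
  have he : ‖Complex.exp (z * t)‖ = Real.exp (z.re * t) := by
    rw [Complex.norm_exp]
    congr 1
    simp [Complex.mul_re]
  rw [Real.norm_eq_abs, abs_of_nonneg (by positivity), he, ← Real.exp_nat_mul]
  congr 1
  push_cast
  ring

/-- The scalar error function of the truncated Laguerre expansion. -/
noncomputable def errF (N : ℕ) (τ α : ℝ) (z : ℂ) (t : ℝ) : ℂ :=
  Complex.exp (z * t) - ∑ n ∈ Finset.range (N + 1), lagCoef α τ n z * (lagFun α τ n t : ℂ)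

lemma memℒp_errF (hτ : 0 < τ) (hα : -1 < α) {z : ℂ} (hz : z.re < 0) (N : ℕ) :
    MemLp (errF N τ α z) 2 (volume.restrict (Ioi 0)) := by
  apply MemLp.sub (memℒp_exp hz)
  exact memLp_finset_sum _ fun n _ => (memℒp_lagFun hτ hα n).const_mul _

lemma integrable_sq_errF (hτ : 0 < τ) (hα : -1 < α) {z : ℂ} (hz : z.re < 0) (N : ℕ) :
    Integrable (fun t => ‖errF N τ α z t‖ ^ 2) (volume.restrict (Ioi 0)) := by
  have h := memℒp_errF hτ hα hz N
  exact (memLp_two_iff_integrable_sq_norm h.aestronglyMeasurable).1 h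

lemma lagZeta_eq (N : ℕ) (z : ℂ) :
    lagZeta N τ α z = ∫ t in Set.Ioi (0:ℝ), ‖errF N τ α z t‖ ^ 2 := rfl

lemma lagZeta_nonneg (N : ℕ) (z : ℂ) : 0 ≤ lagZeta N τ α z := by
  rw [lagZeta_eq]
  exact integral_nonneg fun t => by positivity

/-! ### Matrix norm lemmas -/

variable {M : ℕ}

lemma frobSq_nonneg (C : Matrix (Fin M) (Fin M) ℂ) : 0 ≤ frobSq C := by
  apply Finset.sum_nonneg fun i _ => Finset.sum_nonneg fun j _ => by positivity

lemma frobSq_diagonal (v : Fin M → ℂ) : frobSq (Matrix.diagonal v) = ∑ k, ‖v k‖ ^ 2 := by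
  unfold frobSq
  apply Finset.sum_congr rfl
  intro i _
  rw [Finset.sum_eq_single i]
  · simp [Matrix.diagonal_apply_eq]
  · intro j _ hj
    simp [Matrix.diagonal_apply_ne v (Ne.symm hj)]
  · simp

lemma l2OpNorm_nonneg (C : Matrix (Fin M) (Fin M) ℂ) : 0 ≤ l2OpNorm C := norm_nonneg _

lemma euclid_sq_norm (x : EuclideanSpace ℂ (Fin M)) : ‖x‖ ^ 2 = ∑ i, ‖x i‖ ^ 2 := by
  rw [EuclideanSpace.norm_eq, Real.sq_sqrt]
  positivity

lemma mulVec_sq_le (T : Matrix (Fin M) (Fin M) ℂ) (v : Fin M → ℂ) :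
    ∑ i, ‖T.mulVec v i‖ ^ 2 ≤ l2OpNorm T ^ 2 * ∑ i, ‖v i‖ ^ 2 := by
  set x : EuclideanSpace ℂ (Fin M) := (WithLp.equiv 2 _).symm v with hx
  have h1 : ‖Matrix.toEuclideanCLM (𝕜 := ℂ) T x‖ ≤ l2OpNorm T * ‖x‖ :=
    ContinuousLinearMap.le_opNorm _ x
  have h2 : ‖Matrix.toEuclideanCLM (𝕜 := ℂ) T x‖ ^ 2 = ∑ i, ‖T.mulVec v i‖ ^ 2 := by
    rw [euclid_sq_norm]
    apply Finset.sum_congr rfl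
    intro i _
    rw [hx, WithLp.equiv_symm_apply, Matrix.toEuclideanCLM_toLp, PiLp.toLp_apply]
  have h3 : ‖x‖ ^ 2 = ∑ i, ‖v i‖ ^ 2 := by
    rw [euclid_sq_norm]
    apply Finset.sum_congr rfl
    intro i _
    rw [hx, WithLp.equiv_symm_apply, PiLp.toLp_apply]
  calc ∑ i, ‖T.mulVec v i‖ ^ 2 = ‖Matrix.toEuclideanCLM (𝕜 := ℂ) T x‖ ^ 2 := h2.symm
    _ ≤ (l2OpNorm T * ‖x‖) ^ 2 := by
        apply pow_le_pow_left₀ (norm_nonneg _) h1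
    _ = l2OpNorm T ^ 2 * ∑ i, ‖v i‖ ^ 2 := by rw [mul_pow, h3]

lemma frobSq_mul_left_le (T B : Matrix (Fin M) (Fin M) ℂ) :
    frobSq (T * B) ≤ l2OpNorm T ^ 2 * frobSq B := by
  unfold frobSq
  rw [Finset.sum_comm, Finset.sum_comm (γ := Fin M) (s := Finset.univ) (t := Finset.univ)
    (f := fun i j => ‖B i j‖ ^ 2), Finset.mul_sum]
  apply Finset.sum_le_sum
  intro j _
  have h : (fun i => ‖(T * B) i j‖ ^ 2) = fun i => ‖T.mulVec (fun k => B k j) i‖ ^ 2 := rfl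
  calc ∑ i, ‖(T * B) i j‖ ^ 2 = ∑ i, ‖T.mulVec (fun k => B k j) i‖ ^ 2 := by rw [h]
    _ ≤ l2OpNorm T ^ 2 * ∑ i, ‖B i j‖ ^ 2 := mulVec_sq_le T _

lemma frobSq_conjTranspose (C : Matrix (Fin M) (Fin M) ℂ) : frobSq Cᴴ = frobSq C := by
  unfold frobSq
  rw [Finset.sum_comm]
  apply Finset.sum_congr rfl fun i _ => Finset.sum_congr rfl fun j _ => by
    simp [Matrix.conjTranspose_apply]

section
open scoped Matrix.Norms.L2Operator

lemma l2OpNorm_eq_l2norm (C : Matrix (Fin M) (Fin M) ℂ) : l2OpNorm C = ‖C‖ := by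
  rfl

lemma l2OpNorm_conjTranspose (C : Matrix (Fin M) (Fin M) ℂ) : l2OpNorm Cᴴ = l2OpNorm C := by
  rw [l2OpNorm_eq_l2norm, l2OpNorm_eq_l2norm]
  exact Matrix.l2_opNorm_conjTranspose C

end

lemma frobSq_mul_right_le (B S : Matrix (Fin M) (Fin M) ℂ) :
    frobSq (B * S) ≤ l2OpNorm S ^ 2 * frobSq B := by
  calc frobSq (B * S) = frobSq ((B * S)ᴴ) := (frobSq_conjTranspose _).symm
    _ = frobSq (Sᴴ * Bᴴ) := by rw [Matrix.conjTranspose_mul]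
    _ ≤ l2OpNorm Sᴴ ^ 2 * frobSq Bᴴ := frobSq_mul_left_le _ _
    _ = l2OpNorm S ^ 2 * frobSq B := by rw [l2OpNorm_conjTranspose, frobSq_conjTranspose]

lemma frobSq_conj_le (T C S : Matrix (Fin M) (Fin M) ℂ) :
    frobSq (T * C * S) ≤ (l2OpNorm T * l2OpNorm S) ^ 2 * frobSq C := by
  calc frobSq (T * C * S) ≤ l2OpNorm S ^ 2 * frobSq (T * C) := frobSq_mul_right_le _ _
    _ ≤ l2OpNorm S ^ 2 * (l2OpNorm T ^ 2 * frobSq C) := by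
        apply mul_le_mul_of_nonneg_left (frobSq_mul_left_le _ _) (by positivity)
    _ = (l2OpNorm T * l2OpNorm S) ^ 2 * frobSq C := by ring

/-! ### Diagonalization lemmas -/

lemma hexp_eq (A T : Matrix (Fin M) (Fin M) ℂ) (hT : IsUnit T) (lam : Fin M → ℂ)
    (hA : A = T * Matrix.diagonal lam * T⁻¹) (t : ℝ) :
    NormedSpace.exp ((t : ℂ) • A) =
      T * Matrix.diagonal (fun k => Complex.exp (lam k * t)) * T⁻¹ := by
  rw [hA]
  have h1 : (t : ℂ) • (T * Matrix.diagonal lam * T⁻¹) =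
      T * ((t : ℂ) • Matrix.diagonal lam) * T⁻¹ := by
    rw [mul_smul_comm, smul_mul_assoc]
  rw [h1, Matrix.exp_conj T _ hT]
  congr 1
  rw [← Matrix.diagonal_smul, Matrix.exp_diagonal]
  congr 1
  funext k
  rw [Pi.exp_def, ← Complex.exp_eq_exp_ℂ]
  simp [mul_comm]

lemma conj_diag_apply (T S : Matrix (Fin M) (Fin M) ℂ) (d : Fin M → ℂ) (i j : Fin M) :
    (T * Matrix.diagonal d * S) i j = ∑ k, T i k * d k * S k j := by
  rw [Matrix.mul_apply]
  simp_rw [Matrix.mul_diagonal]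

lemma matLagCoef_eq (hτ : 0 < τ) (hα : -1 < α) (n : ℕ)
    (A T : Matrix (Fin M) (Fin M) ℂ) (hT : IsUnit T) (lam : Fin M → ℂ)
    (hlam : ∀ k, (lam k).re < 0) (hA : A = T * Matrix.diagonal lam * T⁻¹) :
    matLagCoef α τ n A = T * Matrix.diagonal (fun k => lagCoef α τ n (lam k)) * T⁻¹ := by
  ext i j
  show (∫ t in Ioi (0:ℝ), (NormedSpace.exp ((t:ℂ) • A)) i j * (lagFun α τ n t : ℂ)) = _
  have h1 : ∀ t : ℝ, (NormedSpace.exp ((t:ℂ) • A)) i j * (lagFun α τ n t : ℂ)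
      = ∑ k, (T i k * T⁻¹ k j) * (Complex.exp (lam k * t) * (lagFun α τ n t : ℂ)) := by
    intro t
    rw [hexp_eq A T hT lam hA t, conj_diag_apply, Finset.sum_mul]
    exact Finset.sum_congr rfl fun k _ => by ring
  simp_rw [h1]
  rw [integral_finset_sum _
    (fun k _ => ((integrable_exp_mul_lagFun hτ hα (hlam k).le n).const_mul _))]
  rw [conj_diag_apply]
  apply Finset.sum_congr rfl
  intro k _
  rw [integral_const_mul]
  unfold lagCoef
  ring

lemma err_matrix_eq (hτ : 0 < τ) (hα : -1 < α) (N : ℕ)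
    (A T : Matrix (Fin M) (Fin M) ℂ) (hT : IsUnit T) (lam : Fin M → ℂ)
    (hlam : ∀ k, (lam k).re < 0) (hA : A = T * Matrix.diagonal lam * T⁻¹) (t : ℝ) :
    NormedSpace.exp ((t : ℂ) • A) -
        ∑ n ∈ Finset.range (N + 1), (lagFun α τ n t : ℂ) • matLagCoef α τ n A =
      T * Matrix.diagonal (fun k => errF N τ α (lam k) t) * T⁻¹ := by
  ext i j
  rw [Matrix.sub_apply, hexp_eq A T hT lam hA t, conj_diag_apply, Matrix.sum_apply,
    conj_diag_apply]
  have h2 : ∀ n ∈ Finset.range (N + 1), ((lagFun α τ n t : ℂ) • matLagCoef α τ n A) i j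
      = ∑ k, (lagFun α τ n t : ℂ) * (T i k * lagCoef α τ n (lam k) * T⁻¹ k j) := by
    intro n _
    rw [Matrix.smul_apply, matLagCoef_eq hτ hα n A T hT lam hlam hA, conj_diag_apply,
      Finset.smul_sum]
    simp [smul_eq_mul]
  rw [Finset.sum_congr rfl h2, Finset.sum_comm, ← Finset.sum_sub_distrib]
  apply Finset.sum_congr rfl
  intro k _
  unfold errF
  rw [mul_sub, sub_mul, Finset.mul_sum, Finset.sum_mul]
  congr 1
  apply Finset.sum_congr rfl
  intro n _
  ring

end Aux

theorem truncation_error_le_of_diagonalizable (M : ℕ)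
    (A T : Matrix (Fin M) (Fin M) ℂ) (hT : IsUnit T) (lam : Fin M → ℂ)
    (hlam : ∀ k, (lam k).re < 0) (hA : A = T * Matrix.diagonal lam * T⁻¹)
    (τ α : ℝ) (hτ : 0 < τ) (hα : -1 < α) (N : ℕ) :
    Real.sqrt (∫ t in Set.Ioi (0 : ℝ),
        frobSq (NormedSpace.exp ((t : ℂ) • A) -
          ∑ n ∈ Finset.range (N + 1), (lagFun α τ n t : ℂ) • matLagCoef α τ n A)) ≤
        l2OpNorm T * l2OpNorm T⁻¹ * Real.sqrt (∑ k, lagZeta N τ α (lam k)) ∧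
      l2OpNorm T * l2OpNorm T⁻¹ * Real.sqrt (∑ k, lagZeta N τ α (lam k)) ≤
        l2OpNorm T * l2OpNorm T⁻¹ *
          Real.sqrt (M * ⨆ k, lagZeta N τ α (lam k)) := by
  have hκ : (0:ℝ) ≤ l2OpNorm T * l2OpNorm T⁻¹ :=
    mul_nonneg (l2OpNorm_nonneg _) (l2OpNorm_nonneg _)
  constructor
  · -- first inequality
    have key : (∫ t in Set.Ioi (0:ℝ),
        frobSq (NormedSpace.exp ((t : ℂ) • A) -
          ∑ n ∈ Finset.range (N + 1), (lagFun α τ n t : ℂ) • matLagCoef α τ n A)) ≤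
        (l2OpNorm T * l2OpNorm T⁻¹) ^ 2 * ∑ k, lagZeta N τ α (lam k) := by
      have hg : Integrable
          (fun t => (l2OpNorm T * l2OpNorm T⁻¹) ^ 2 * ∑ k, ‖errF N τ α (lam k) t‖ ^ 2)
          (volume.restrict (Set.Ioi 0)) :=
        (integrable_finset_sum _ fun k _ => integrable_sq_errF hτ hα (hlam k) N).const_mul _
      have h1 := integral_mono_of_nonneg
        (f := fun t : ℝ => frobSq (NormedSpace.exp ((t : ℂ) • A) -
          ∑ n ∈ Finset.range (N + 1), (lagFun α τ n t : ℂ) • matLagCoef α τ n A))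
        (g := fun t : ℝ => (l2OpNorm T * l2OpNorm T⁻¹) ^ 2 * ∑ k, ‖errF N τ α (lam k) t‖ ^ 2)
        (μ := volume.restrict (Set.Ioi 0))
        (Filter.Eventually.of_forall fun t => frobSq_nonneg _) hg
        (Filter.Eventually.of_forall fun t => by
          dsimp only
          rw [err_matrix_eq hτ hα N A T hT lam hlam hA t]
          calc frobSq (T * Matrix.diagonal (fun k => errF N τ α (lam k) t) * T⁻¹)
              ≤ (l2OpNorm T * l2OpNorm T⁻¹) ^ 2 *
                frobSq (Matrix.diagonal (fun k => errF N τ α (lam k) t)) :=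
                frobSq_conj_le _ _ _
            _ = (l2OpNorm T * l2OpNorm T⁻¹) ^ 2 * ∑ k, ‖errF N τ α (lam k) t‖ ^ 2 := by
                rw [frobSq_diagonal])
      refine h1.trans (le_of_eq ?_)
      rw [integral_const_mul,
        integral_finset_sum _ fun k _ => integrable_sq_errF hτ hα (hlam k) N]
      rfl
    calc Real.sqrt _ ≤ Real.sqrt ((l2OpNorm T * l2OpNorm T⁻¹) ^ 2 *
          ∑ k, lagZeta N τ α (lam k)) := Real.sqrt_le_sqrt key
      _ = l2OpNorm T * l2OpNorm T⁻¹ * Real.sqrt (∑ k, lagZeta N τ α (lam k)) := by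
          rw [Real.sqrt_mul (by positivity), Real.sqrt_sq hκ]
  · -- second inequality
    apply mul_le_mul_of_nonneg_left _ hκ
    apply Real.sqrt_le_sqrt
    rcases Nat.eq_zero_or_pos M with hM | hM
    · subst hM
      simp
    · have : Nonempty (Fin M) := ⟨⟨0, hM⟩⟩
      calc ∑ k, lagZeta N τ α (lam k) ≤ ∑ _k : Fin M, ⨆ j, lagZeta N τ α (lam j) :=
          Finset.sum_le_sum fun k _ =>
            le_ciSup (f := fun j => lagZeta N τ α (lam j))
              (Set.Finite.bddAbove (Set.finite_range _)) k
        _ = M * ⨆ j, lagZeta N τ α (lam j) := by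
            rw [Finset.sum_const, Finset.card_univ, Fintype.card_fin, nsmul_eq_mul]
end

section
/- Let α > −1 be real, n ∈ ℕ, and λ ∈ ℂ with Re λ < 0. Then the map τ ↦ s_{n,τ,α,λ} is differentiable on (0,∞), and its derivative at τ > 0 equals d_{n+1} · s_{n+1,τ,α,λ} − d_n · s_{n−1,τ,α,λ}, where d_m = √(m(m+α))/(2τ) for m ≥ 1, d_0 = 0, and s_{−1,τ,α,λ} := 0. -/
open MeasureTheory

/-- The coefficient `d_m = √(m(m+α))/(2τ)` (which vanishes for `m = 0`). -/
noncomputable def dCoef (α τ : ℝ) (m : ℕ) : ℝ :=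
  Real.sqrt (m * (m + α)) / (2 * τ)


set_option maxHeartbeats 2000000

set_option maxHeartbeats 2000000
open MeasureTheory

noncomputable def aCo (α : ℝ) (n k : ℕ) : ℝ :=
  (-1 : ℝ) ^ k * (Real.Gamma (n + α + 1) / (Real.Gamma (k + α + 1) * (n - k).factorial)) /
    (k.factorial : ℝ)

lemma lagPoly_eq (α : ℝ) (n : ℕ) (u : ℝ) :
    lagPoly α n u = ∑ k ∈ Finset.range (n + 1), aCo α n k * u ^ k := by
  unfold lagPoly aCo
  exact Finset.sum_congr rfl fun k _ => by ring

variable {α : ℝ}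

lemma Gsucc (hα : -1 < α) (x : ℝ) (hx : 0 ≤ x) :
    Real.Gamma ((x + α + 1) + 1) = (x + α + 1) * Real.Gamma (x + α + 1) :=
  Real.Gamma_add_one (ne_of_gt (by linarith))

lemma fne : ∀ m : ℕ, ((m.factorial : ℝ)) ≠ 0 := fun m => by exact_mod_cast m.factorial_ne_zero

lemma coeff_id (hα : -1 < α) (n k : ℕ) (hk : k ≤ n + 1) :
    (if k ≤ n then aCo α n k * (α + 1 + 2 * (k : ℝ)) else 0)
      - (if 1 ≤ k then aCo α n (k - 1) else 0)
    = ((n : ℝ) + 1) * aCo α (n + 1) k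
      - (if k < n then ((n : ℝ) + α) * aCo α (n - 1) k else 0) := by
  rcases lt_or_ge k n with hlt | hge
  · rcases Nat.eq_zero_or_pos k with rfl | hk1
    · -- k = 0 < n
      obtain ⟨e, rfl⟩ : ∃ e, n = e + 1 := ⟨n - 1, by omega⟩
      simp only [if_pos (Nat.zero_le _), if_neg (by omega : ¬ (1:ℕ) ≤ 0), if_pos hlt]
      unfold aCo
      have s1 : e + 1 - 0 = e + 1 := by omega
      have s2 : e + 1 + 1 - 0 = e + 1 + 1 := by omega
      have s3 : e + 1 - 1 = e := by omega
      have s4 : e - 0 = e := by omega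
      rw [s1, s2, s3, s4]
      have he0 : (0:ℝ) ≤ (e:ℝ) := by positivity
      have ga : Real.Gamma ((↑(0:ℕ):ℝ) + α + 1) = Real.Gamma (α + 1) := by norm_num
      have en0 : Real.Gamma ((↑(e+1):ℝ) + α + 1) = ((e:ℝ)+α+1) * Real.Gamma ((e:ℝ)+α+1) := by
        rw [show ((↑(e+1):ℝ) + α + 1) = ((e:ℝ)+α+1) + 1 by push_cast; ring]
        exact Gsucc hα _ he0
      have en1 : Real.Gamma ((↑(e+1+1):ℝ) + α + 1)
          = ((e:ℝ)+α+1+1) * (((e:ℝ)+α+1) * Real.Gamma ((e:ℝ)+α+1)) := by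
        rw [show ((↑(e+1+1):ℝ) + α + 1) = (((e:ℝ)+α+1) + 1) + 1 by push_cast; ring,
          Real.Gamma_add_one (by intro h; nlinarith : ((e:ℝ)+α+1) + 1 ≠ 0), Gsucc hα _ he0]
      rw [ga, en0, en1]
      have g0 : (0:ℝ) < Real.Gamma (α + 1) := Real.Gamma_pos_of_pos (by linarith)
      have g1 : (0:ℝ) < Real.Gamma ((e:ℝ)+α+1) := Real.Gamma_pos_of_pos (by linarith)
      have h1 : ((e:ℝ)+α+1) ≠ 0 := ne_of_gt (by linarith)
      have h2 : ((e:ℝ)+α+1+1) ≠ 0 := ne_of_gt (by linarith)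
      have h3 : ((e:ℝ)+1) ≠ 0 := by positivity
      have h4 : ((e:ℝ)+1+1) ≠ 0 := by positivity
      push_cast [Nat.factorial_succ]
      field_simp
      ring
    · -- 1 ≤ k < n
      obtain ⟨j, rfl⟩ : ∃ j, k = j + 1 := ⟨k - 1, by omega⟩
      obtain ⟨e, rfl⟩ : ∃ e, n = j + 1 + (e + 1) := ⟨n - j - 2, by omega⟩
      simp only [if_pos (by omega : j + 1 ≤ j + 1 + (e+1)), if_pos (by omega : 1 ≤ j + 1),
        if_pos hlt]
      unfold aCo
      have s1 : j + 1 + (e + 1) - (j + 1) = e + 1 := by omega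
      have s2 : j + 1 + (e + 1) + 1 - (j + 1) = e + 1 + 1 := by omega
      have s3 : j + 1 + (e + 1) - 1 = j + e + 1 := by omega
      have s4 : j + e + 1 - (j + 1) = e := by omega
      have s5 : j + 1 - 1 = j := by omega
      have s6 : j + 1 + (e + 1) - j = e + 1 + 1 := by omega
      rw [s1, s2, s3, s4, s5, s6]
      have hj0 : (0:ℝ) ≤ (j:ℝ) := by positivity
      have hb0 : (0:ℝ) ≤ (j:ℝ) + (e:ℝ) + 1 := by positivity
      have ek1 : Real.Gamma ((↑(j+1):ℝ) + α + 1) = ((j:ℝ)+α+1) * Real.Gamma ((j:ℝ)+α+1) := by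
        rw [show ((↑(j+1):ℝ) + α + 1) = ((j:ℝ)+α+1) + 1 by push_cast; ring]
        exact Gsucc hα _ hj0
      have en0 : Real.Gamma ((↑(j+e+1):ℝ) + α + 1) = Real.Gamma ((j:ℝ)+(e:ℝ)+1+α+1) := by
        norm_num
      have en1 : Real.Gamma ((↑(j+1+(e+1)):ℝ) + α + 1)
          = ((j:ℝ)+(e:ℝ)+1+α+1) * Real.Gamma ((j:ℝ)+(e:ℝ)+1+α+1) := by
        rw [show ((↑(j+1+(e+1)):ℝ) + α + 1) = ((j:ℝ)+(e:ℝ)+1+α+1) + 1 by push_cast; ring]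
        exact Gsucc hα _ hb0
      have en2 : Real.Gamma ((↑(j+1+(e+1)+1):ℝ) + α + 1)
          = ((j:ℝ)+(e:ℝ)+1+α+1+1) * (((j:ℝ)+(e:ℝ)+1+α+1) * Real.Gamma ((j:ℝ)+(e:ℝ)+1+α+1)) := by
        rw [show ((↑(j+1+(e+1)+1):ℝ) + α + 1) = (((j:ℝ)+(e:ℝ)+1+α+1) + 1) + 1 by push_cast; ring,
          Real.Gamma_add_one (by intro h; nlinarith [hb0] : ((j:ℝ)+(e:ℝ)+1+α+1) + 1 ≠ 0),
          Gsucc hα _ hb0]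
      rw [ek1, en0, en1, en2]
      have g1 : (0:ℝ) < Real.Gamma ((j:ℝ)+α+1) := Real.Gamma_pos_of_pos (by linarith)
      have g2 : (0:ℝ) < Real.Gamma ((j:ℝ)+(e:ℝ)+1+α+1) := Real.Gamma_pos_of_pos (by linarith)
      have h1 : ((j:ℝ)+α+1) ≠ 0 := ne_of_gt (by linarith)
      have h2 : ((j:ℝ)+(e:ℝ)+1+α+1) ≠ 0 := ne_of_gt (by linarith)
      have h3 : ((j:ℝ)+(e:ℝ)+1+α+1+1) ≠ 0 := ne_of_gt (by linarith)
      push_cast [Nat.factorial_succ, pow_succ]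
      field_simp
      ring
  · rcases eq_or_lt_of_le hge with rfl | hgt
    · -- k = n
      simp only [if_pos le_rfl, if_neg (lt_irrefl n)]
      rcases Nat.eq_zero_or_pos n with rfl | hk1
      · -- k = n = 0
        simp only [if_neg (by omega : ¬ (1:ℕ) ≤ 0)]
        unfold aCo
        have ga : Real.Gamma ((↑(0:ℕ):ℝ) + α + 1) = Real.Gamma (α + 1) := by norm_num
        have en0 : Real.Gamma ((↑(0+1:ℕ):ℝ) + α + 1)
            = (0+α+1) * Real.Gamma (0 + α + 1) := by
          rw [show ((↑(0+1:ℕ):ℝ) + α + 1) = ((0:ℝ)+α+1) + 1 by push_cast; ring]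
          exact Gsucc hα _ le_rfl
        rw [ga, en0]
        have g0 : (0:ℝ) < Real.Gamma (0 + α + 1) := Real.Gamma_pos_of_pos (by linarith)
        norm_num
        field_simp
      · -- k = n ≥ 1
        obtain ⟨m, rfl⟩ : ∃ m, n = m + 1 := ⟨n - 1, by omega⟩
        simp only [if_pos (by omega : 1 ≤ m + 1)]
        unfold aCo
        have s1 : m + 1 - (m + 1) = 0 := by omega
        have s2 : m + 1 - 1 = m := by omega
        have s3 : m + 1 - m = 1 := by omega
        have s4 : m + 1 + 1 - (m + 1) = 1 := by omega
        rw [s1, s2, s3, s4]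
        have hm0 : (0:ℝ) ≤ (m:ℝ) := by positivity
        have ek1 : Real.Gamma ((↑(m+1):ℝ) + α + 1) = ((m:ℝ)+α+1) * Real.Gamma ((m:ℝ)+α+1) := by
          rw [show ((↑(m+1):ℝ) + α + 1) = ((m:ℝ)+α+1) + 1 by push_cast; ring]
          exact Gsucc hα _ hm0
        have ek2 : Real.Gamma ((↑(m+1+1):ℝ) + α + 1)
            = ((m:ℝ)+α+1+1) * (((m:ℝ)+α+1) * Real.Gamma ((m:ℝ)+α+1)) := by
          rw [show ((↑(m+1+1):ℝ) + α + 1) = (((m:ℝ)+α+1) + 1) + 1 by push_cast; ring,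
            Real.Gamma_add_one (by intro h; nlinarith : ((m:ℝ)+α+1) + 1 ≠ 0), Gsucc hα _ hm0]
        rw [ek1, ek2]
        have g1 : (0:ℝ) < Real.Gamma ((m:ℝ)+α+1) := Real.Gamma_pos_of_pos (by linarith)
        have h1 : ((m:ℝ)+α+1) ≠ 0 := ne_of_gt (by linarith)
        have h2 : ((m:ℝ)+α+1+1) ≠ 0 := ne_of_gt (by linarith)
        push_cast [Nat.factorial_succ, pow_succ]
        field_simp
        ring
    · -- k = n + 1
      have hkn : k = n + 1 := by omega
      subst hkn
      simp only [if_neg (by omega : ¬ n + 1 ≤ n), if_pos (by omega : 1 ≤ n + 1),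
        if_neg (by omega : ¬ n + 1 < n), Nat.add_sub_cancel]
      unfold aCo
      have s1 : n - n = 0 := by omega
      have s2 : n + 1 - (n + 1) = 0 := by omega
      rw [s1, s2]
      have hn0 : (0:ℝ) ≤ (n:ℝ) := by positivity
      have gn : (0:ℝ) < Real.Gamma ((n:ℝ) + α + 1) := Real.Gamma_pos_of_pos (by linarith)
      have gn1 : (0:ℝ) < Real.Gamma ((↑(n+1):ℝ) + α + 1) := by
        apply Real.Gamma_pos_of_pos; push_cast; linarith
      push_cast [Nat.factorial_succ, pow_succ] at *
      field_simp
      ring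

lemma key_id (hα : -1 < α) (n : ℕ) (u : ℝ) :
    (α + 1 - u) * lagPoly α n u
      + ∑ k ∈ Finset.range (n + 1), aCo α n k * (2 * (k : ℝ)) * u ^ k
    = ((n : ℝ) + 1) * lagPoly α (n + 1) u
      - (if n = 0 then (0 : ℝ) else (n : ℝ) + α) * lagPoly α (n - 1) u := by
  rw [lagPoly_eq α n, lagPoly_eq α (n + 1), lagPoly_eq α (n - 1)]
  have hA : ∑ k ∈ Finset.range (n + 2),
        (if k ≤ n then aCo α n k * (α + 1 + 2 * (k : ℝ)) else 0) * u ^ k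
      = ∑ k ∈ Finset.range (n + 1), aCo α n k * (α + 1 + 2 * (k : ℝ)) * u ^ k := by
    rw [Finset.sum_range_succ, if_neg (by omega), zero_mul, add_zero]
    exact Finset.sum_congr rfl fun k hk => by
      rw [if_pos (by have := Finset.mem_range.mp hk; omega)]
  have hB : ∑ k ∈ Finset.range (n + 2),
        (if 1 ≤ k then aCo α n (k - 1) else 0) * u ^ k
      = ∑ k ∈ Finset.range (n + 1), aCo α n k * u ^ (k + 1) := by
    rw [Finset.sum_range_succ' (fun k => (if 1 ≤ k then aCo α n (k - 1) else 0) * u ^ k) (n + 1)]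
    simp only [if_neg (by omega : ¬ (1 : ℕ) ≤ 0), zero_mul, add_zero]
    exact Finset.sum_congr rfl fun k hk => by
      rw [if_pos (by omega), Nat.add_sub_cancel]
  have hR2 : ∑ k ∈ Finset.range (n + 2),
        (if k < n then ((n : ℝ) + α) * aCo α (n - 1) k else 0) * u ^ k
      = (if n = 0 then (0 : ℝ) else (n : ℝ) + α)
          * ∑ k ∈ Finset.range (n - 1 + 1), aCo α (n - 1) k * u ^ k := by
    rcases Nat.eq_zero_or_pos n with rfl | hn
    · simp
    · obtain ⟨m, rfl⟩ : ∃ m, n = m + 1 := ⟨n - 1, by omega⟩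
      rw [if_neg (by omega)]
      rw [show m + 1 + 2 = m + 1 + 1 + 1 from by omega]
      rw [Finset.sum_range_succ, Finset.sum_range_succ, if_neg (by omega), if_neg (by omega),
        zero_mul, zero_mul, add_zero, add_zero, Finset.mul_sum]
      rw [show m + 1 - 1 + 1 = m + 1 from by omega]
      exact Finset.sum_congr rfl fun k hk => by
        rw [if_pos (by have := Finset.mem_range.mp hk; omega)]
        ring
  have hL : (α + 1 - u) * (∑ k ∈ Finset.range (n + 1), aCo α n k * u ^ k)
        + ∑ k ∈ Finset.range (n + 1), aCo α n k * (2 * (k : ℝ)) * u ^ k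
      = (∑ k ∈ Finset.range (n + 1), aCo α n k * (α + 1 + 2 * (k : ℝ)) * u ^ k)
        - ∑ k ∈ Finset.range (n + 1), aCo α n k * u ^ (k + 1) := by
    rw [Finset.mul_sum, ← Finset.sum_add_distrib, ← Finset.sum_sub_distrib]
    exact Finset.sum_congr rfl fun k _ => by ring
  rw [hL, ← hA, ← hB, ← Finset.sum_sub_distrib]
  have hstep : ∑ k ∈ Finset.range (n + 2),
        ((if k ≤ n then aCo α n k * (α + 1 + 2 * (k : ℝ)) else 0) * u ^ k
          - (if 1 ≤ k then aCo α n (k - 1) else 0) * u ^ k)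
      = ∑ k ∈ Finset.range (n + 2),
          ((((n : ℝ) + 1) * aCo α (n + 1) k) * u ^ k
            - (if k < n then ((n : ℝ) + α) * aCo α (n - 1) k else 0) * u ^ k) :=
    Finset.sum_congr rfl fun k hk => by
      rw [← sub_mul, ← sub_mul,
        coeff_id hα n k (by have := Finset.mem_range.mp hk; omega)]
  rw [hstep, Finset.sum_sub_distrib, hR2]
  congr 1
  rw [Finset.mul_sum]
  exact Finset.sum_congr (by norm_num) fun k _ => by ring

lemma sq1 (hα : -1 < α) (n : ℕ) :
    Real.sqrt ((↑(n+1) : ℝ) * ((↑(n+1) : ℝ) + α))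
        * Real.sqrt (((n+1).factorial : ℝ) / Real.Gamma ((↑(n+1) : ℝ) + α + 1))
      = ((n : ℝ) + 1) * Real.sqrt ((n.factorial : ℝ) / Real.Gamma ((n : ℝ) + α + 1)) := by
  have hn0 : (0:ℝ) ≤ (n:ℝ) := by positivity
  have hg : (0:ℝ) < Real.Gamma ((n:ℝ) + α + 1) := Real.Gamma_pos_of_pos (by linarith)
  have hG1 : Real.Gamma ((↑(n+1) : ℝ) + α + 1)
      = ((n:ℝ) + α + 1) * Real.Gamma ((n : ℝ) + α + 1) := by
    rw [show ((↑(n+1):ℝ) + α + 1) = ((n:ℝ)+α+1) + 1 by push_cast; ring]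
    exact Gsucc hα _ hn0
  rw [hG1, ← Real.sqrt_mul (by push_cast; nlinarith)]
  rw [show ((n:ℝ)+1) * Real.sqrt ((n.factorial : ℝ) / Real.Gamma ((n : ℝ) + α + 1))
      = Real.sqrt (((n:ℝ)+1)^2) * Real.sqrt ((n.factorial : ℝ) / Real.Gamma ((n : ℝ) + α + 1)) by
    rw [Real.sqrt_sq (by positivity)]]
  rw [← Real.sqrt_mul (by positivity)]
  congr 1
  have hne : ((n:ℝ) + α + 1) ≠ 0 := ne_of_gt (by linarith)
  push_cast [Nat.factorial_succ]
  field_simp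
  ring

lemma sq2 (hα : -1 < α) (m : ℕ) :
    Real.sqrt ((↑(m+1) : ℝ) * ((↑(m+1) : ℝ) + α))
        * Real.sqrt ((m.factorial : ℝ) / Real.Gamma ((m : ℝ) + α + 1))
      = ((m : ℝ) + 1 + α) * Real.sqrt (((m+1).factorial : ℝ) / Real.Gamma ((↑(m+1):ℝ) + α + 1)) := by
  have hm0 : (0:ℝ) ≤ (m:ℝ) := by positivity
  have hg : (0:ℝ) < Real.Gamma ((m:ℝ) + α + 1) := Real.Gamma_pos_of_pos (by linarith)
  have hma : (0:ℝ) < (m:ℝ) + 1 + α := by linarith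
  have hG1 : Real.Gamma ((↑(m+1) : ℝ) + α + 1)
      = ((m:ℝ) + α + 1) * Real.Gamma ((m : ℝ) + α + 1) := by
    rw [show ((↑(m+1):ℝ) + α + 1) = ((m:ℝ)+α+1) + 1 by push_cast; ring]
    exact Gsucc hα _ hm0
  rw [hG1, ← Real.sqrt_mul (by push_cast; nlinarith)]
  rw [show ((m:ℝ)+1+α) * Real.sqrt (((m+1).factorial : ℝ) / (((m:ℝ) + α + 1) * Real.Gamma ((m : ℝ) + α + 1)))
      = Real.sqrt (((m:ℝ)+1+α)^2) * Real.sqrt (((m+1).factorial : ℝ) / (((m:ℝ) + α + 1) * Real.Gamma ((m : ℝ) + α + 1))) by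
    rw [Real.sqrt_sq (le_of_lt hma)]]
  rw [← Real.sqrt_mul (by positivity)]
  congr 1
  have hne : ((m:ℝ) + α + 1) ≠ 0 := ne_of_gt (by linarith)
  push_cast [Nat.factorial_succ]
  field_simp
  ring

lemma hasDerivAt_lagFun (hα : -1 < α) (n : ℕ) {t s : ℝ} (ht : 0 < t) (hs : 0 < s) :
    HasDerivAt (fun s : ℝ => lagFun α s n t)
      (dCoef α s (n + 1) * lagFun α s (n + 1) t - dCoef α s n * lagFun α s (n - 1) t) s := by
  have hs' : s ≠ 0 := hs.ne'
  set c : ℝ := Real.sqrt ((n.factorial : ℝ) / Real.Gamma ((n : ℝ) + α + 1)) with hc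
  have h1 : HasDerivAt (fun s : ℝ => c * s ^ ((α + 1) / 2) * t ^ (α / 2))
      (c * (((α + 1) / 2) * s ^ ((α + 1) / 2 - 1)) * t ^ (α / 2)) s :=
    ((Real.hasDerivAt_rpow_const (Or.inl hs')).const_mul c).mul_const _
  have h2 : HasDerivAt (fun s : ℝ => Real.exp (-s * t / 2))
      (Real.exp (-s * t / 2) * (-(t / 2))) s := by
    have hfun : (fun s : ℝ => -s * t / 2) = fun s : ℝ => s * (-(t / 2)) :=
      funext fun s => by ring
    have hlin : HasDerivAt (fun s : ℝ => -s * t / 2) (-(t / 2)) s := by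
      rw [hfun]; exact hasDerivAt_mul_const _
    exact hlin.exp
  have h3 : HasDerivAt (fun s : ℝ => lagPoly α n (s * t))
      (∑ k ∈ Finset.range (n + 1), aCo α n k * ((k : ℝ) * (s * t) ^ (k - 1) * t)) s := by
    have hfun : (fun s : ℝ => lagPoly α n (s * t))
        = fun s : ℝ => ∑ k ∈ Finset.range (n + 1), aCo α n k * (s * t) ^ k :=
      funext fun s => lagPoly_eq α n (s * t)
    rw [hfun]
    exact HasDerivAt.fun_sum fun k _ => ((hasDerivAt_mul_const t).pow k).const_mul _
  have H := (h1.mul h2).mul h3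
  have hfun2 : (fun s : ℝ => lagFun α s n t)
      = fun s : ℝ => c * s ^ ((α + 1) / 2) * t ^ (α / 2) * Real.exp (-s * t / 2)
          * lagPoly α n (s * t) := funext fun s => rfl
  rw [hfun2]
  refine H.congr_deriv ?_
  symm
  simp only [Pi.mul_apply]
  have hse : s ^ ((α + 1) / 2) = s ^ ((α + 1) / 2 - 1) * s := by
    conv_lhs => rw [show (α + 1) / 2 = ((α + 1) / 2 - 1) + 1 by ring]
    rw [Real.rpow_add_one hs']
  have hdiv : s ^ ((α + 1) / 2) / s = s ^ ((α + 1) / 2 - 1) := by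
    rw [hse, mul_div_cancel_right₀ _ hs']
  have hsum2 : s * ∑ k ∈ Finset.range (n + 1), aCo α n k * ((k : ℝ) * (s * t) ^ (k - 1) * t)
      = (1 / 2) * ∑ k ∈ Finset.range (n + 1), aCo α n k * (2 * (k : ℝ)) * (s * t) ^ k := by
    rw [Finset.mul_sum, Finset.mul_sum]
    refine Finset.sum_congr rfl fun k _ => ?_
    cases k with
    | zero => simp
    | succ j =>
      have hp : (s * t) ^ (j + 1) = (s * t) ^ j * (s * t) := pow_succ _ _
      simp only [Nat.add_sub_cancel, hp]
      push_cast
      ring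
  have e1 : dCoef α s (n + 1) * lagFun α s (n + 1) t
      = c * s ^ ((α + 1) / 2 - 1) * t ^ (α / 2) * Real.exp (-s * t / 2) * (1 / 2)
          * (((n : ℝ) + 1) * lagPoly α (n + 1) (s * t)) := by
    unfold dCoef lagFun
    calc Real.sqrt ((↑(n+1) : ℝ) * ((↑(n+1) : ℝ) + α)) / (2 * s)
          * (Real.sqrt (((n+1).factorial : ℝ) / Real.Gamma ((↑(n+1) : ℝ) + α + 1))
              * s ^ ((α + 1) / 2) * t ^ (α / 2) * Real.exp (-s * t / 2)
              * lagPoly α (n + 1) (s * t))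
        = (Real.sqrt ((↑(n+1) : ℝ) * ((↑(n+1) : ℝ) + α))
            * Real.sqrt (((n+1).factorial : ℝ) / Real.Gamma ((↑(n+1) : ℝ) + α + 1)))
            * (s ^ ((α + 1) / 2) / s) * t ^ (α / 2) * Real.exp (-s * t / 2)
            * lagPoly α (n + 1) (s * t) / 2 := by ring
      _ = (((n : ℝ) + 1) * c) * s ^ ((α + 1) / 2 - 1) * t ^ (α / 2) * Real.exp (-s * t / 2)
            * lagPoly α (n + 1) (s * t) / 2 := by rw [sq1 hα n, hdiv]
      _ = _ := by ring
  have e2 : dCoef α s n * lagFun α s (n - 1) t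
      = c * s ^ ((α + 1) / 2 - 1) * t ^ (α / 2) * Real.exp (-s * t / 2) * (1 / 2)
          * ((if n = 0 then (0 : ℝ) else (n : ℝ) + α) * lagPoly α (n - 1) (s * t)) := by
    rcases Nat.eq_zero_or_pos n with rfl | hn
    · simp [dCoef]
    · obtain ⟨m, rfl⟩ : ∃ m, n = m + 1 := ⟨n - 1, by omega⟩
      rw [if_neg (by omega)]
      unfold dCoef lagFun
      simp only [Nat.add_sub_cancel]
      calc Real.sqrt ((↑(m+1) : ℝ) * ((↑(m+1) : ℝ) + α)) / (2 * s)
            * (Real.sqrt ((m.factorial : ℝ) / Real.Gamma ((m : ℝ) + α + 1))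
                * s ^ ((α + 1) / 2) * t ^ (α / 2) * Real.exp (-s * t / 2)
                * lagPoly α m (s * t))
          = (Real.sqrt ((↑(m+1) : ℝ) * ((↑(m+1) : ℝ) + α))
              * Real.sqrt ((m.factorial : ℝ) / Real.Gamma ((m : ℝ) + α + 1)))
              * (s ^ ((α + 1) / 2) / s) * t ^ (α / 2) * Real.exp (-s * t / 2)
              * lagPoly α m (s * t) / 2 := by ring
        _ = (((m : ℝ) + 1 + α)
              * Real.sqrt (((m+1).factorial : ℝ) / Real.Gamma ((↑(m+1) : ℝ) + α + 1)))
              * s ^ ((α + 1) / 2 - 1) * t ^ (α / 2) * Real.exp (-s * t / 2)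
              * lagPoly α m (s * t) / 2 := by rw [sq2 hα m, hdiv]
        _ = _ := by rw [← hc]; push_cast; ring
  rw [e1, e2]
  linear_combination (c * s ^ ((α + 1) / 2 - 1) * t ^ (α / 2) * Real.exp (-s * t / 2) / 2)
        * (key_id hα n (s * t)).symm
    + (c * t ^ (α / 2) * Real.exp (-s * t / 2) * t * lagPoly α n (s * t) / 2
        - c * t ^ (α / 2) * Real.exp (-s * t / 2)
            * ∑ k ∈ Finset.range (n + 1), aCo α n k * ((k : ℝ) * (s * t) ^ (k - 1) * t)) * hse
    - (c * t ^ (α / 2) * Real.exp (-s * t / 2) * s ^ ((α + 1) / 2 - 1)) * hsum2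

-- continuity of lagFun in t on (0,∞)
lemma contOn_lagFun (α τ : ℝ) (n : ℕ) :
    ContinuousOn (fun t : ℝ => lagFun α τ n t) (Set.Ioi 0) := by
  unfold lagFun
  apply ContinuousOn.mul
  apply ContinuousOn.mul
  apply ContinuousOn.mul
  · exact continuousOn_const
  · intro t ht
    exact (Real.continuousAt_rpow_const t (α / 2)
      (Or.inl (ne_of_gt (Set.mem_Ioi.mp ht)))).continuousWithinAt
  · exact (Real.continuous_exp.comp (by continuity)).continuousOn
  · have hcont : Continuous fun t : ℝ => lagPoly α n (τ * t) := by
      have : (fun t : ℝ => lagPoly α n (τ * t))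
          = fun t : ℝ => ∑ k ∈ Finset.range (n + 1), aCo α n k * (τ * t) ^ k :=
        funext fun t => lagPoly_eq α n (τ * t)
      rw [this]
      exact continuous_finset_sum _ fun k _ =>
        continuous_const.mul ((continuous_const.mul continuous_id).pow k)
    exact hcont.continuousOn

lemma aesm_lag (α τ : ℝ) (n : ℕ) (z : ℂ) :
    AEStronglyMeasurable (fun t : ℝ => Complex.exp (z * t) * (lagFun α τ n t : ℂ))
      (volume.restrict (Set.Ioi 0)) := by
  apply ContinuousOn.aestronglyMeasurable _ measurableSet_Ioi
  exact ((Complex.continuous_exp.comp (continuous_const.mul Complex.continuous_ofReal)).continuousOn).mul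
    (Complex.continuous_ofReal.comp_continuousOn (contOn_lagFun α τ n))

lemma rpow_bdd {a b s e : ℝ} (ha : 0 < a) (h1 : a ≤ s) (h2 : s ≤ b) :
    s ^ e ≤ a ^ e + b ^ e := by
  rcases le_or_gt 0 e with he | he
  · have h := Real.rpow_le_rpow (by linarith) h2 he
    have : (0:ℝ) < a ^ e := Real.rpow_pos_of_pos ha e
    linarith
  · have h := Real.rpow_le_rpow_of_nonpos ha h1 (le_of_lt he)
    have : (0:ℝ) < b ^ e := Real.rpow_pos_of_pos (by linarith) e
    linarith

noncomputable def Cb (α τ : ℝ) (m : ℕ) : ℝ :=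
  Real.sqrt ((m.factorial : ℝ) / Real.Gamma ((m : ℝ) + α + 1)) *
    ((τ / 2) ^ ((α + 1) / 2) + (3 * τ / 2) ^ ((α + 1) / 2)) *
    ∑ k ∈ Finset.range (m + 1), |aCo α m k| * (3 * τ / 2) ^ k

lemma Cb_nonneg (α : ℝ) {τ : ℝ} (hτ : 0 < τ) (m : ℕ) : 0 ≤ Cb α τ m := by
  unfold Cb
  apply mul_nonneg
  apply mul_nonneg (Real.sqrt_nonneg _)
  · have := Real.rpow_pos_of_pos (by linarith : (0:ℝ) < τ/2) ((α+1)/2)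
    have := Real.rpow_pos_of_pos (by linarith : (0:ℝ) < 3*τ/2) ((α+1)/2)
    linarith
  · exact Finset.sum_nonneg fun k _ => mul_nonneg (abs_nonneg _) (by positivity)

lemma abs_lagFun_le {α τ : ℝ} (hτ : 0 < τ) (m : ℕ) {s t : ℝ}
    (hs1 : τ / 2 ≤ s) (hs2 : s ≤ 3 * τ / 2) (ht : 0 < t) :
    |lagFun α s m t| ≤ Cb α τ m * (t ^ (α / 2) * (1 + t) ^ m * Real.exp (-(τ / 4) * t)) := by
  have hs0 : 0 < s := lt_of_lt_of_le (by linarith) hs1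
  have h1t : (0:ℝ) ≤ 1 + t := by linarith
  unfold lagFun
  set c : ℝ := Real.sqrt ((m.factorial : ℝ) / Real.Gamma ((m : ℝ) + α + 1)) with hc
  have hcn : 0 ≤ c := Real.sqrt_nonneg _
  -- bound the polynomial
  have hP : |lagPoly α m (s * t)|
      ≤ (∑ k ∈ Finset.range (m + 1), |aCo α m k| * (3 * τ / 2) ^ k) * (1 + t) ^ m := by
    rw [lagPoly_eq, Finset.sum_mul]
    refine (Finset.abs_sum_le_sum_abs _ _).trans (Finset.sum_le_sum fun k hk => ?_)
    rw [abs_mul, abs_pow, abs_of_nonneg (by positivity : (0:ℝ) ≤ s * t)]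
    rw [mul_assoc]
    refine mul_le_mul_of_nonneg_left ?_ (abs_nonneg _)
    have e1 : (s * t) ^ k ≤ (3 * τ / 2) ^ k * t ^ k := by
      rw [← mul_pow]
      exact pow_le_pow_left₀ (by positivity) (by nlinarith) k
    refine e1.trans (mul_le_mul_of_nonneg_left ?_ (by positivity))
    calc t ^ k ≤ (1 + t) ^ k := pow_le_pow_left₀ (le_of_lt ht) (by linarith) k
      _ ≤ (1 + t) ^ m := pow_le_pow_right₀ (by linarith)
          (by have := Finset.mem_range.mp hk; omega)
  have hE : Real.exp (-s * t / 2) ≤ Real.exp (-(τ / 4) * t) :=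
    Real.exp_le_exp.mpr (by nlinarith)
  have hrp : s ^ ((α + 1) / 2) ≤ (τ / 2) ^ ((α + 1) / 2) + (3 * τ / 2) ^ ((α + 1) / 2) :=
    rpow_bdd (by linarith) hs1 hs2
  have hta : (0:ℝ) ≤ t ^ (α / 2) := Real.rpow_nonneg (le_of_lt ht) _
  have hsa : (0:ℝ) ≤ s ^ ((α + 1) / 2) := Real.rpow_nonneg (le_of_lt hs0) _
  have hEp : (0:ℝ) < Real.exp (-s * t / 2) := Real.exp_pos _
  rw [abs_mul, abs_mul, abs_mul, abs_mul,
    abs_of_nonneg hcn, abs_of_nonneg hsa, abs_of_nonneg hta,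
    abs_of_nonneg (le_of_lt hEp)]
  unfold Cb
  rw [← hc]
  calc c * s ^ ((α + 1) / 2) * t ^ (α / 2) * Real.exp (-s * t / 2) * |lagPoly α m (s * t)|
      ≤ c * ((τ / 2) ^ ((α + 1) / 2) + (3 * τ / 2) ^ ((α + 1) / 2)) * t ^ (α / 2)
          * Real.exp (-(τ / 4) * t)
          * ((∑ k ∈ Finset.range (m + 1), |aCo α m k| * (3 * τ / 2) ^ k) * (1 + t) ^ m) := by
        apply mul_le_mul
        · apply mul_le_mul
          · apply mul_le_mul
            · exact mul_le_mul_of_nonneg_left hrp hcn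
            · exact le_rfl
            · exact hta
            · positivity
          · exact hE
          · exact le_of_lt hEp
          · positivity
        · exact hP
        · exact abs_nonneg _
        · positivity
    _ = _ := by ring

lemma integ_aux {α : ℝ} (hα : -1 < α) {b : ℝ} (hb : 0 < b) (M : ℕ) :
    IntegrableOn (fun t : ℝ => t ^ (α / 2) * (1 + t) ^ M * Real.exp (-b * t)) (Set.Ioi 0) := by
  have haux : ∀ j : ℕ, IntegrableOn
      (fun t : ℝ => t ^ (α / 2 + (j : ℝ)) * Real.exp (-b * t)) (Set.Ioi 0) := by
    intro j
    have h := integrableOn_rpow_mul_exp_neg_mul_rpow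
      (show (-1:ℝ) < α / 2 + (j : ℝ) by
        have : (0:ℝ) ≤ (j:ℝ) := by positivity
        linarith) zero_lt_one hb
    exact h.congr_fun (fun x hx => by simp only [Real.rpow_one]) measurableSet_Ioi
  have hg : IntegrableOn (fun t : ℝ => ∑ j ∈ Finset.range (M + 1),
      (M.choose j : ℝ) * (t ^ (α / 2 + (j : ℝ)) * Real.exp (-b * t))) (Set.Ioi 0) :=
    integrable_finset_sum _ fun j _ => ((haux j).const_mul _)
  refine hg.congr_fun (fun t ht => ?_) measurableSet_Ioi
  have ht0 : (0:ℝ) < t := Set.mem_Ioi.mp ht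
  rw [show (1 : ℝ) + t = t + 1 by ring, add_pow, Finset.mul_sum, Finset.sum_mul]
  refine Finset.sum_congr rfl fun j hj => ?_
  rw [Real.rpow_add ht0, Real.rpow_natCast]
  ring

lemma integrable_bound {α : ℝ} (hα : -1 < α) {τ : ℝ} (hτ : 0 < τ) (C : ℝ) (M : ℕ) :
    Integrable (fun t : ℝ => C * (t ^ (α / 2) * (1 + t) ^ M * Real.exp (-(τ / 4) * t)))
      (volume.restrict (Set.Ioi 0)) :=
  (integ_aux hα (by linarith : (0:ℝ) < τ / 4) M).const_mul C

lemma norm_integrand {z : ℂ} (t : ℝ) (x : ℝ) :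
    ‖Complex.exp (z * t) * (x : ℂ)‖ = Real.exp (z.re * t) * |x| := by
  rw [norm_mul, Complex.norm_exp, Complex.norm_real, Real.norm_eq_abs]
  congr 2
  simp [Complex.mul_re]

lemma exp_re_le_one {z : ℂ} (hz : z.re < 0) {t : ℝ} (ht : 0 < t) :
    Real.exp (z.re * t) ≤ 1 := by
  rw [show (1:ℝ) = Real.exp 0 by rw [Real.exp_zero]]
  exact Real.exp_le_exp.mpr (by nlinarith)

lemma int_lag {α : ℝ} (hα : -1 < α) {τ : ℝ} (hτ : 0 < τ) (m : ℕ) {z : ℂ} (hz : z.re < 0) :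
    Integrable (fun t : ℝ => Complex.exp (z * t) * (lagFun α τ m t : ℂ))
      (volume.restrict (Set.Ioi 0)) := by
  refine Integrable.mono' (integrable_bound hα hτ (Cb α τ m) m) (aesm_lag α τ m z) ?_
  rw [ae_restrict_iff' measurableSet_Ioi]
  refine Filter.Eventually.of_forall fun t ht => ?_
  have ht0 : (0:ℝ) < t := Set.mem_Ioi.mp ht
  rw [norm_integrand]
  calc Real.exp (z.re * t) * |lagFun α τ m t|
      ≤ 1 * (Cb α τ m * (t ^ (α / 2) * (1 + t) ^ m * Real.exp (-(τ / 4) * t))) :=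
        mul_le_mul (exp_re_le_one hz ht0)
          (abs_lagFun_le hτ m (by linarith) (by linarith) ht0) (abs_nonneg _) zero_le_one
    _ = _ := one_mul _

theorem hasDerivAt_lagCoef_tau (α : ℝ) (hα : -1 < α) (n : ℕ) (z : ℂ) (hz : z.re < 0)
    (τ : ℝ) (hτ : 0 < τ) :
    HasDerivAt (fun s : ℝ => lagCoef α s n z)
      ((dCoef α τ (n + 1) : ℂ) * lagCoef α τ (n + 1) z -
        (dCoef α τ n : ℂ) * lagCoef α τ (n - 1) z)
      τ := by
  have hball : ∀ s ∈ Metric.ball τ (τ / 2), τ / 2 ≤ s ∧ s ≤ 3 * τ / 2 := by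
    intro s hs
    rw [Real.ball_eq_Ioo] at hs
    obtain ⟨h1, h2⟩ := hs
    constructor <;> nlinarith
  set F' : ℝ → ℝ → ℂ := fun s t => Complex.exp (z * t) *
      ((dCoef α s (n + 1) * lagFun α s (n + 1) t - dCoef α s n * lagFun α s (n - 1) t : ℝ) : ℂ)
    with hF'
  set B : ℝ := Real.sqrt ((↑(n+1) : ℝ) * ((↑(n+1) : ℝ) + α)) / τ * Cb α τ (n + 1)
      + Real.sqrt ((n : ℝ) * ((n : ℝ) + α)) / τ * Cb α τ (n - 1) with hB
  have key := hasDerivAt_integral_of_dominated_loc_of_deriv_le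
      (μ := volume.restrict (Set.Ioi 0))
      (F := fun s t => Complex.exp (z * t) * (lagFun α s n t : ℂ)) (F' := F') (x₀ := τ)
      (bound := fun t => B * (t ^ (α / 2) * (1 + t) ^ (n + 1) * Real.exp (-(τ / 4) * t)))
      (s := Metric.ball τ (τ / 2)) (Metric.ball_mem_nhds τ (by linarith))
      (Filter.Eventually.of_forall fun s => aesm_lag α s n z)
      (int_lag hα hτ n hz)
      ?_ ?_ ?_ ?_
  rotate_left
  · -- measurability of F' τ
    apply ContinuousOn.aestronglyMeasurable _ measurableSet_Ioi
    refine ContinuousOn.mul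
      ((Complex.continuous_exp.comp (continuous_const.mul Complex.continuous_ofReal)).continuousOn)
      (Complex.continuous_ofReal.comp_continuousOn ?_)
    exact ((contOn_lagFun α τ (n + 1)).const_smul (dCoef α τ (n + 1))).sub
      ((contOn_lagFun α τ (n - 1)).const_smul (dCoef α τ n))
  · -- bound
    rw [ae_restrict_iff' measurableSet_Ioi]
    refine Filter.Eventually.of_forall fun t ht s hsball => ?_
    have ht0 : (0:ℝ) < t := Set.mem_Ioi.mp ht
    obtain ⟨hs1, hs2⟩ := hball s hsball
    have hs0 : (0:ℝ) < s := lt_of_lt_of_le (by linarith) hs1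
    rw [hF']
    rw [norm_integrand]
    have habs : |dCoef α s (n + 1) * lagFun α s (n + 1) t - dCoef α s n * lagFun α s (n - 1) t|
        ≤ |dCoef α s (n + 1)| * |lagFun α s (n + 1) t|
          + |dCoef α s n| * |lagFun α s (n - 1) t| := by
      calc _ ≤ |dCoef α s (n + 1) * lagFun α s (n + 1) t| + |dCoef α s n * lagFun α s (n - 1) t| :=
            abs_sub _ _
        _ = _ := by rw [abs_mul, abs_mul]
    have hd : ∀ m : ℕ, |dCoef α s m| ≤ Real.sqrt ((m : ℝ) * ((m : ℝ) + α)) / τ := by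
      intro m
      unfold dCoef
      rw [abs_div, abs_of_nonneg (Real.sqrt_nonneg _), abs_of_nonneg (by linarith)]
      exact div_le_div_of_nonneg_left (Real.sqrt_nonneg _) hτ (by linarith)
    have hl1 : |lagFun α s (n + 1) t|
        ≤ Cb α τ (n + 1) * (t ^ (α / 2) * (1 + t) ^ (n + 1) * Real.exp (-(τ / 4) * t)) :=
      abs_lagFun_le hτ (n + 1) hs1 hs2 ht0
    have hl2 : |lagFun α s (n - 1) t|
        ≤ Cb α τ (n - 1) * (t ^ (α / 2) * (1 + t) ^ (n + 1) * Real.exp (-(τ / 4) * t)) := by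
      refine (abs_lagFun_le hτ (n - 1) hs1 hs2 ht0).trans ?_
      refine mul_le_mul_of_nonneg_left ?_ (Cb_nonneg α hτ (n - 1))
      have hp : (1 + t) ^ (n - 1) ≤ (1 + t) ^ (n + 1) :=
        pow_le_pow_right₀ (by linarith) (by omega)
      have h1 : (0:ℝ) ≤ t ^ (α / 2) := Real.rpow_nonneg (le_of_lt ht0) _
      have h2 : (0:ℝ) < Real.exp (-(τ / 4) * t) := Real.exp_pos _
      calc t ^ (α / 2) * (1 + t) ^ (n - 1) * Real.exp (-(τ / 4) * t)
          ≤ t ^ (α / 2) * (1 + t) ^ (n + 1) * Real.exp (-(τ / 4) * t) := by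
            apply mul_le_mul_of_nonneg_right _ (le_of_lt h2)
            exact mul_le_mul_of_nonneg_left hp h1
        _ = _ := rfl
    have hd1 := hd (n + 1)
    have hd2 := hd n
    have habs1 : (0:ℝ) ≤ |dCoef α s (n+1)| := abs_nonneg _
    have habs2 : (0:ℝ) ≤ |dCoef α s n| := abs_nonneg _
    have hX : (0:ℝ) ≤ t ^ (α / 2) * (1 + t) ^ (n + 1) * Real.exp (-(τ / 4) * t) := by positivity
    calc Real.exp (z.re * t)
          * |dCoef α s (n + 1) * lagFun α s (n + 1) t - dCoef α s n * lagFun α s (n - 1) t|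
        ≤ 1 * (|dCoef α s (n + 1)| * |lagFun α s (n + 1) t|
            + |dCoef α s n| * |lagFun α s (n - 1) t|) :=
          mul_le_mul (exp_re_le_one hz ht0) habs (abs_nonneg _) zero_le_one
      _ = |dCoef α s (n + 1)| * |lagFun α s (n + 1) t|
            + |dCoef α s n| * |lagFun α s (n - 1) t| := one_mul _
      _ ≤ (Real.sqrt ((↑(n+1) : ℝ) * ((↑(n+1) : ℝ) + α)) / τ)
            * (Cb α τ (n + 1) * (t ^ (α / 2) * (1 + t) ^ (n + 1) * Real.exp (-(τ / 4) * t)))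
          + (Real.sqrt ((n : ℝ) * ((n : ℝ) + α)) / τ)
            * (Cb α τ (n - 1) * (t ^ (α / 2) * (1 + t) ^ (n + 1) * Real.exp (-(τ / 4) * t))) := by
          exact add_le_add
            (mul_le_mul hd1 hl1 (abs_nonneg _) (by positivity))
            (mul_le_mul hd2 hl2 (abs_nonneg _) (by positivity))
      _ = B * (t ^ (α / 2) * (1 + t) ^ (n + 1) * Real.exp (-(τ / 4) * t)) := by
          rw [hB]; ring
  · -- integrability of bound
    exact integrable_bound hα hτ B (n + 1)
  · -- differentiability
    rw [ae_restrict_iff' measurableSet_Ioi]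
    refine Filter.Eventually.of_forall fun t ht s hsball => ?_
    have ht0 : (0:ℝ) < t := Set.mem_Ioi.mp ht
    obtain ⟨hs1, hs2⟩ := hball s hsball
    have hs0 : (0:ℝ) < s := lt_of_lt_of_le (by linarith) hs1
    exact ((hasDerivAt_lagFun hα n ht0 hs0).ofReal_comp).const_mul (Complex.exp (z * t))
  · obtain ⟨hint, hder⟩ := key
    have hval : (∫ t in Set.Ioi (0:ℝ), F' τ t)
        = (dCoef α τ (n + 1) : ℂ) * lagCoef α τ (n + 1) z
          - (dCoef α τ n : ℂ) * lagCoef α τ (n - 1) z := by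
      have hsplit : (fun t : ℝ => F' τ t)
          = fun t : ℝ => (dCoef α τ (n + 1) : ℂ)
              * (Complex.exp (z * t) * (lagFun α τ (n + 1) t : ℂ))
            - (dCoef α τ n : ℂ) * (Complex.exp (z * t) * (lagFun α τ (n - 1) t : ℂ)) := by
        funext t
        rw [hF']
        push_cast
        ring
      rw [hsplit, integral_sub (((int_lag hα hτ (n+1) hz)).const_mul _)
        (((int_lag hα hτ (n-1) hz)).const_mul _), integral_const_mul, integral_const_mul]
      rfl
    rw [← hval]
    exact hder
end
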